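/- arXiv:2009.09892 — 5 statements merged into one kernel-verified Lean document; each statement's English description precedes it below -/
import Mathlib

section
/- Let H be a complex Hilbert space and A, B bounded linear operators on H. Then ‖A + B‖ ≤ sqrt(‖A*A + B*B‖ + 2·ω(B*A)). -/
/-- The numerical radius of a bounded linear operator on a complex Hilbert space:
`ω(A) = sup { ‖⟨Ax, x⟩‖ : ‖x‖ = 1 }`. -/
noncomputable def numericalRadius {H : Type*} [NormedAddCommGroup H] [InnerProductSpace ℂ H]
    [CompleteSpace H] (A : H →L[ℂ] H) : ℝ :=
  ⨆ x : {x : H // ‖x‖ = 1}, ‖(inner ℂ (A x) (x : H) : ℂ)‖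

lemma inner_norm_le_numericalRadius_mul {H : Type*} [NormedAddCommGroup H]
    [InnerProductSpace ℂ H] [CompleteSpace H] (C : H →L[ℂ] H) (x : H) :
    ‖(inner ℂ (C x) x : ℂ)‖ ≤ numericalRadius C * ‖x‖ ^ 2 := by
  rcases eq_or_ne x 0 with rfl | hx
  · simp [numericalRadius]
  · have hxn : (0:ℝ) < ‖x‖ := norm_pos_iff.mpr hx
    set a : ℝ := ‖x‖⁻¹ with ha
    have ha0 : 0 < a := inv_pos.mpr hxn
    set u : H := (a : ℂ) • x with hu
    have hnu : ‖u‖ = 1 := by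
      rw [hu, norm_smul]
      simp [ha, abs_of_pos ha0, inv_mul_cancel₀ hxn.ne']
    have hbdd : BddAbove (Set.range fun y : {y : H // ‖y‖ = 1} =>
        ‖(inner ℂ (C y) (y : H) : ℂ)‖) := by
      refine ⟨‖C‖, ?_⟩
      rintro _ ⟨⟨y, hy⟩, rfl⟩
      calc ‖(inner ℂ (C y) y : ℂ)‖ ≤ ‖C y‖ * ‖y‖ := norm_inner_le_norm _ _
        _ ≤ ‖C‖ * ‖y‖ * ‖y‖ := by gcongr; exact C.le_opNorm y
        _ = ‖C‖ := by rw [hy]; ring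
    have hle : ‖(inner ℂ (C u) (u : H) : ℂ)‖ ≤ numericalRadius C :=
      le_ciSup hbdd (⟨u, hnu⟩ : {y : H // ‖y‖ = 1})
    have hcomp : (inner ℂ (C u) u : ℂ) = ((a:ℂ))^2 * inner ℂ (C x) x := by
      rw [hu, map_smul, inner_smul_left, inner_smul_right, Complex.conj_ofReal]
      ring
    rw [hcomp, norm_mul, norm_pow] at hle
    have han : ‖(a:ℂ)‖ = a := by
      simp [Complex.norm_real, abs_of_pos ha0]
    rw [han] at hle
    have ha2 : a ^ 2 * ‖x‖ ^ 2 = 1 := by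
      rw [ha]
      field_simp
    nlinarith [norm_nonneg (inner ℂ (C x) x : ℂ), sq_nonneg a, hle]

theorem norm_add_le_sqrt_norm_add_two_numericalRadius
    {H : Type*} [NormedAddCommGroup H] [InnerProductSpace ℂ H] [CompleteSpace H]
    (A B : H →L[ℂ] H) :
    ‖A + B‖ ≤ Real.sqrt
      (‖ContinuousLinearMap.adjoint A * A + ContinuousLinearMap.adjoint B * B‖ +
        2 * numericalRadius (ContinuousLinearMap.adjoint B * A)) := by
  set C := ContinuousLinearMap.adjoint A * A + ContinuousLinearMap.adjoint B * B with hC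
  set ω := numericalRadius (ContinuousLinearMap.adjoint B * A) with hω'
  have hω : 0 ≤ ω := Real.iSup_nonneg fun _ => norm_nonneg _
  have hK : 0 ≤ ‖C‖ + 2 * ω := by positivity
  refine ContinuousLinearMap.opNorm_le_bound _ (Real.sqrt_nonneg _) fun x => ?_
  have key : ‖(A + B) x‖ ^ 2 ≤ (‖C‖ + 2 * ω) * ‖x‖ ^ 2 := by
    have h1 : ‖(A + B) x‖ ^ 2
        = Complex.re (inner ℂ (C x) x : ℂ) + 2 * Complex.re
            (inner ℂ ((ContinuousLinearMap.adjoint B * A) x) x : ℂ) := by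
      have expand : ‖A x + B x‖ ^ 2 = ‖A x‖ ^ 2 + 2 * Complex.re (inner ℂ (A x) (B x) : ℂ)
          + ‖B x‖ ^ 2 := by
        simpa using @norm_add_sq ℂ _ _ _ _ (A x) (B x)
      have hA : Complex.re (inner ℂ ((ContinuousLinearMap.adjoint A * A) x) x : ℂ) = ‖A x‖ ^ 2 := by
        rw [ContinuousLinearMap.mul_apply, ContinuousLinearMap.adjoint_inner_left]
        exact inner_self_eq_norm_sq (𝕜 := ℂ) _
      have hB : Complex.re (inner ℂ ((ContinuousLinearMap.adjoint B * B) x) x : ℂ) = ‖B x‖ ^ 2 := by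
        rw [ContinuousLinearMap.mul_apply, ContinuousLinearMap.adjoint_inner_left]
        exact inner_self_eq_norm_sq (𝕜 := ℂ) _
      have hBA : (inner ℂ ((ContinuousLinearMap.adjoint B * A) x) x : ℂ) = inner ℂ (A x) (B x) := by
        rw [ContinuousLinearMap.mul_apply, ContinuousLinearMap.adjoint_inner_left]
      rw [hC]
      simp only [ContinuousLinearMap.add_apply, inner_add_left, map_add, hBA, Complex.add_re]
      rw [expand, hA, hB]
      ring
    have h2 : Complex.re (inner ℂ (C x) x : ℂ) ≤ ‖C‖ * ‖x‖ ^ 2 := by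
      calc Complex.re (inner ℂ (C x) x : ℂ) ≤ ‖(inner ℂ (C x) x : ℂ)‖ := Complex.re_le_norm _
        _ ≤ ‖C x‖ * ‖x‖ := norm_inner_le_norm _ _
        _ ≤ ‖C‖ * ‖x‖ * ‖x‖ := by gcongr; exact C.le_opNorm x
        _ = ‖C‖ * ‖x‖ ^ 2 := by ring
    have h3 : Complex.re (inner ℂ ((ContinuousLinearMap.adjoint B * A) x) x : ℂ) ≤ ω * ‖x‖ ^ 2 := by
      calc Complex.re (inner ℂ ((ContinuousLinearMap.adjoint B * A) x) x : ℂ)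
          ≤ ‖(inner ℂ ((ContinuousLinearMap.adjoint B * A) x) x : ℂ)‖ := Complex.re_le_norm _
        _ ≤ ω * ‖x‖ ^ 2 := inner_norm_le_numericalRadius_mul _ x
    rw [h1]; nlinarith
  have h4 : ‖(A + B) x‖ ≤ Real.sqrt ((‖C‖ + 2 * ω) * ‖x‖ ^ 2) := by
    rw [show ‖(A + B) x‖ = Real.sqrt (‖(A + B) x‖ ^ 2) by
      rw [Real.sqrt_sq (norm_nonneg _)]]
    exact Real.sqrt_le_sqrt key
  calc ‖(A + B) x‖ ≤ Real.sqrt ((‖C‖ + 2 * ω) * ‖x‖ ^ 2) := h4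
    _ = Real.sqrt (‖C‖ + 2 * ω) * ‖x‖ := by
        rw [Real.sqrt_mul hK, Real.sqrt_sq (norm_nonneg _)]
end

section
/- Let H be a complex Hilbert space and A a bounded linear operator on H. Then (1/4)·‖A*A + AA*‖ ≤ (1/2)·sqrt(2·ω(A)⁴ + (1/8)·ω((A* − A)²·(A* + A)²)). (Note that A*A = |A|² and AA* = |A*|².) -/
section Aux

variable {H : Type*} [NormedAddCommGroup H] [InnerProductSpace ℂ H] [CompleteSpace H]

lemma numericalRadius_nonneg (A : H →L[ℂ] H) : 0 ≤ numericalRadius A :=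
  Real.iSup_nonneg fun _ => norm_nonneg _

lemma inner_le_numericalRadius (A : H →L[ℂ] H) {x : H} (hx : ‖x‖ = 1) :
    ‖(inner ℂ (A x) x : ℂ)‖ ≤ numericalRadius A := by
  have hbdd : BddAbove (Set.range fun x : {x : H // ‖x‖ = 1} =>
      ‖(inner ℂ (A x) (x : H) : ℂ)‖) := by
    refine ⟨‖A‖, ?_⟩
    rintro _ ⟨⟨y, hy⟩, rfl⟩
    calc ‖(inner ℂ (A y) y : ℂ)‖ ≤ ‖A y‖ * ‖y‖ := norm_inner_le_norm _ _
      _ ≤ (‖A‖ * ‖y‖) * ‖y‖ := by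
          exact mul_le_mul_of_nonneg_right (A.le_opNorm y) (norm_nonneg _)
      _ = ‖A‖ := by rw [hy]; ring
  exact le_ciSup hbdd (⟨x, hx⟩ : {x : H // ‖x‖ = 1})

/-- A selfadjoint operator whose numerical values on unit vectors are bounded by `M`
has operator norm at most `M`. -/
lemma selfadjoint_norm_le (T : H →L[ℂ] H) (hT : ContinuousLinearMap.adjoint T = T)
    {M : ℝ} (hM : 0 ≤ M) (h : ∀ x : H, ‖x‖ = 1 → ‖(inner ℂ (T x) x : ℂ)‖ ≤ M) :
    ‖T‖ ≤ M := by
  -- bound on arbitrary vectors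
  have h' : ∀ x : H, ‖(inner ℂ (T x) x : ℂ)‖ ≤ M * ‖x‖ ^ 2 := by
    intro x
    rcases eq_or_ne x 0 with rfl | hx0
    · simp
    · have hnx : (0:ℝ) < ‖x‖ := norm_pos_iff.mpr hx0
      set c : ℂ := ((‖x‖ : ℝ) : ℂ)⁻¹ with hc
      have hcn : ‖c‖ = ‖x‖⁻¹ := by
        simp [hc]
      set u : H := c • x with hu
      have hun : ‖u‖ = 1 := by
        rw [hu, norm_smul, hcn, inv_mul_cancel₀ (ne_of_gt hnx)]
      have h1 := h u hun
      have hTu : (inner ℂ (T u) u : ℂ) = starRingEnd ℂ c * (c * inner ℂ (T x) x) := by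
        rw [hu, map_smul, inner_smul_left, inner_smul_right]
      rw [hTu] at h1
      have hnorm : ‖starRingEnd ℂ c * (c * (inner ℂ (T x) x : ℂ))‖ =
          ‖x‖⁻¹ * (‖x‖⁻¹ * ‖(inner ℂ (T x) x : ℂ)‖) := by
        rw [norm_mul, norm_mul, RCLike.norm_conj, hcn]
      rw [hnorm] at h1
      have key := mul_le_mul_of_nonneg_left h1
        (by positivity : (0:ℝ) ≤ ‖x‖ * ‖x‖)
      have hid : ‖x‖ * ‖x‖ * (‖x‖⁻¹ * (‖x‖⁻¹ * ‖(inner ℂ (T x) x : ℂ)‖)) =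
          ‖(inner ℂ (T x) x : ℂ)‖ := by
        field_simp
      rw [hid] at key
      calc ‖(inner ℂ (T x) x : ℂ)‖ ≤ ‖x‖ * ‖x‖ * M := key
        _ = M * ‖x‖ ^ 2 := by ring
  -- real-part polarization bound
  have hre : ∀ x y : H, RCLike.re (inner ℂ (T x) y : ℂ) ≤
      (M * ‖x + y‖ ^ 2 + M * ‖x - y‖ ^ 2) / 4 := by
    intro x y
    have e1 : (inner ℂ (T (x + y)) (x + y) : ℂ) =
        inner ℂ (T x) x + inner ℂ (T x) y + inner ℂ (T y) x + inner ℂ (T y) y := by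
      simp only [map_add, inner_add_left, inner_add_right]; ring
    have e2 : (inner ℂ (T (x - y)) (x - y) : ℂ) =
        inner ℂ (T x) x - inner ℂ (T x) y - inner ℂ (T y) x + inner ℂ (T y) y := by
      simp only [map_sub, inner_sub_left, inner_sub_right]; ring
    have hsym : (inner ℂ (T y) x : ℂ) = starRingEnd ℂ (inner ℂ (T x) y : ℂ) := by
      rw [← hT, ContinuousLinearMap.adjoint_inner_left, inner_conj_symm, hT]
    have key : (4 : ℝ) * RCLike.re (inner ℂ (T x) y : ℂ) =
        RCLike.re (inner ℂ (T (x + y)) (x + y) : ℂ) -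
        RCLike.re (inner ℂ (T (x - y)) (x - y) : ℂ) := by
      rw [e1, e2, hsym]
      simp only [map_add, map_sub, RCLike.conj_re]
      ring
    have b1 : RCLike.re (inner ℂ (T (x + y)) (x + y) : ℂ) ≤ M * ‖x + y‖ ^ 2 :=
      (RCLike.re_le_norm _).trans (h' _)
    have b2 : -RCLike.re (inner ℂ (T (x - y)) (x - y) : ℂ) ≤ M * ‖x - y‖ ^ 2 := by
      calc -RCLike.re (inner ℂ (T (x - y)) (x - y) : ℂ)
          ≤ |RCLike.re (inner ℂ (T (x - y)) (x - y) : ℂ)| := neg_le_abs _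
        _ ≤ ‖(inner ℂ (T (x - y)) (x - y) : ℂ)‖ := RCLike.abs_re_le_norm _
        _ ≤ M * ‖x - y‖ ^ 2 := h' _
    linarith
  -- norm bound on all vectors
  have hTx : ∀ x : H, ‖T x‖ ≤ M * ‖x‖ := by
    intro x
    rcases eq_or_ne (T x) 0 with hTx0 | hTx0
    · rw [hTx0, norm_zero]; positivity
    · have hTnx : (0:ℝ) < ‖T x‖ := norm_pos_iff.mpr hTx0
      set r : ℝ := ‖x‖ / ‖T x‖ with hr
      have hr0 : 0 ≤ r := div_nonneg (norm_nonneg x) (norm_nonneg _)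
      set y : H := ((r : ℝ) : ℂ) • T x with hy
      have hny : ‖y‖ = ‖x‖ := by
        rw [hy, norm_smul, Complex.norm_real, Real.norm_eq_abs, abs_of_nonneg hr0, hr,
          div_mul_cancel₀ _ (ne_of_gt hTnx)]
      have hrey : RCLike.re (inner ℂ (T x) y : ℂ) = ‖x‖ * ‖T x‖ := by
        rw [hy, inner_smul_right, RCLike.re_to_complex, Complex.re_ofReal_mul,
          ← RCLike.re_to_complex, @inner_self_eq_norm_sq ℂ, hr]
        field_simp
      have hb := hre x y
      rw [hrey] at hb
      have hpar : ‖x + y‖ ^ 2 + ‖x - y‖ ^ 2 = 2 * (‖x‖ ^ 2 + ‖y‖ ^ 2) := by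
        have := parallelogram_law_with_norm ℂ x y
        nlinarith [this]
      have hkey : ‖x‖ * ‖T x‖ ≤ M * ‖x‖ ^ 2 := by
        rw [hny] at hpar
        nlinarith [hb, hpar]
      rcases eq_or_ne x 0 with rfl | hx0
      · simp only [map_zero] at hTx0; exact absurd rfl hTx0
      · have hnx : (0:ℝ) < ‖x‖ := norm_pos_iff.mpr hx0
        nlinarith [hkey]
  exact T.opNorm_le_bound hM hTx

end Aux

set_option maxHeartbeats 1000000 in
theorem quarter_norm_le_half_sqrt
    {H : Type*} [NormedAddCommGroup H] [InnerProductSpace ℂ H] [CompleteSpace H]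
    (A : H →L[ℂ] H) :
    (1 / 4) * ‖ContinuousLinearMap.adjoint A * A + A * ContinuousLinearMap.adjoint A‖ ≤
      (1 / 2) * Real.sqrt (2 * numericalRadius A ^ 4 +
        (1 / 8) * numericalRadius ((ContinuousLinearMap.adjoint A - A) ^ 2 *
          (ContinuousLinearMap.adjoint A + A) ^ 2)) := by
  set A' := ContinuousLinearMap.adjoint A with hA'
  set B := A' + A with hBdef
  set C := A' - A with hCdef
  set S := A' * A + A * A' with hSdef
  set ω := numericalRadius A with hω
  set m := numericalRadius (C ^ 2 * B ^ 2) with hm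
  have hω0 : 0 ≤ ω := numericalRadius_nonneg A
  have hm0 : 0 ≤ m := numericalRadius_nonneg _
  have hstar : ∀ T : H →L[ℂ] H, ContinuousLinearMap.adjoint T = star T :=
    fun T => (ContinuousLinearMap.star_eq_adjoint T).symm
  have hA'star : A' = star A := by rw [hA', hstar]
  have hBsa : ContinuousLinearMap.adjoint B = B := by
    rw [hstar, hBdef, hA'star, star_add, star_star, add_comm]
  have hCsa : ContinuousLinearMap.adjoint C = -C := by
    rw [hstar, hCdef, hA'star, star_sub, star_star, neg_sub]
  have hCstar : star C = -C := by rw [← hstar]; exact hCsa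
  have hSsa : ContinuousLinearMap.adjoint S = S := by
    rw [hstar, hSdef, hA'star, star_add, star_mul, star_mul, star_star, add_comm]
  -- numerical values of B and C are bounded by 2ω
  have hadjval : ∀ x : H, (inner ℂ (A' x) x : ℂ) = starRingEnd ℂ (inner ℂ (A x) x : ℂ) := by
    intro x
    rw [hA', ContinuousLinearMap.adjoint_inner_left, inner_conj_symm]
  have hBval : ∀ x : H, ‖x‖ = 1 → ‖(inner ℂ (B x) x : ℂ)‖ ≤ 2 * ω := by
    intro x hx
    have e : (inner ℂ (B x) x : ℂ) = inner ℂ (A' x) x + inner ℂ (A x) x := by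
      rw [hBdef, ContinuousLinearMap.add_apply, inner_add_left]
    rw [e]
    calc ‖(inner ℂ (A' x) x : ℂ) + inner ℂ (A x) x‖
        ≤ ‖(inner ℂ (A' x) x : ℂ)‖ + ‖(inner ℂ (A x) x : ℂ)‖ := norm_add_le _ _
      _ = 2 * ‖(inner ℂ (A x) x : ℂ)‖ := by rw [hadjval, RCLike.norm_conj]; ring
      _ ≤ 2 * ω := by linarith [inner_le_numericalRadius A hx]
  have hCval : ∀ x : H, ‖x‖ = 1 → ‖(inner ℂ (C x) x : ℂ)‖ ≤ 2 * ω := by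
    intro x hx
    have e : (inner ℂ (C x) x : ℂ) = inner ℂ (A' x) x - inner ℂ (A x) x := by
      rw [hCdef, ContinuousLinearMap.sub_apply, inner_sub_left]
    rw [e]
    calc ‖(inner ℂ (A' x) x : ℂ) - inner ℂ (A x) x‖
        ≤ ‖(inner ℂ (A' x) x : ℂ)‖ + ‖(inner ℂ (A x) x : ℂ)‖ := norm_sub_le _ _
      _ = 2 * ‖(inner ℂ (A x) x : ℂ)‖ := by rw [hadjval, RCLike.norm_conj]; ring
      _ ≤ 2 * ω := by linarith [inner_le_numericalRadius A hx]
  have hBnorm : ‖B‖ ≤ 2 * ω := selfadjoint_norm_le B hBsa (by linarith) hBval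
  have hCnorm : ‖C‖ ≤ 2 * ω := by
    have hC'sa : ContinuousLinearMap.adjoint (Complex.I • C) = Complex.I • C := by
      rw [hstar, star_smul, hCstar, Complex.star_def, Complex.conj_I, neg_smul, smul_neg,
        neg_neg]
    have hC'val : ∀ x : H, ‖x‖ = 1 → ‖(inner ℂ ((Complex.I • C) x) x : ℂ)‖ ≤ 2 * ω := by
      intro x hx
      rw [ContinuousLinearMap.smul_apply, inner_smul_left, norm_mul, RCLike.norm_conj,
        Complex.norm_I, one_mul]
      exact hCval x hx
    have := selfadjoint_norm_le _ hC'sa (by linarith) hC'val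
    rwa [norm_smul, Complex.norm_I, one_mul] at this
  -- operator identity B² − C² = S + S
  have hid : B ^ 2 - C ^ 2 = S + S := by
    simp only [hBdef, hCdef, hSdef, pow_two]
    ext x
    simp only [ContinuousLinearMap.sub_apply, ContinuousLinearMap.mul_apply,
      ContinuousLinearMap.add_apply, map_add, map_sub]
    abel
  -- bound the numerical values of S on unit vectors
  have hSval : ∀ x : H, ‖x‖ = 1 → ‖(inner ℂ (S x) x : ℂ)‖ ≤
      Real.sqrt (8 * ω ^ 4 + m / 2) := by
    intro x hx
    rw [← Real.sqrt_sq (norm_nonneg (inner ℂ (S x) x : ℂ))]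
    apply Real.sqrt_le_sqrt
    have h1 : ‖(inner ℂ (S x) x : ℂ)‖ ^ 2 ≤ ‖S x‖ ^ 2 := by
      have := norm_inner_le_norm (𝕜 := ℂ) (S x) x
      rw [hx, mul_one] at this
      nlinarith [norm_nonneg (inner ℂ (S x) x : ℂ)]
    have h2 : ‖(B ^ 2) x - (C ^ 2) x‖ = 2 * ‖S x‖ := by
      have e : (B ^ 2) x - (C ^ 2) x = (2 : ℝ) • S x := by
        rw [← ContinuousLinearMap.sub_apply, hid, ContinuousLinearMap.add_apply, two_smul]
      rw [e, norm_smul, Real.norm_ofNat]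
    have h3 : ‖(B ^ 2) x - (C ^ 2) x‖ ^ 2 =
        ‖(B ^ 2) x‖ ^ 2 - 2 * RCLike.re (inner ℂ ((B ^ 2) x) ((C ^ 2) x) : ℂ) +
          ‖(C ^ 2) x‖ ^ 2 := norm_sub_sq _ _
    have hB2x : ‖(B ^ 2) x‖ ≤ 4 * ω ^ 2 := by
      calc ‖(B ^ 2) x‖ ≤ ‖B ^ 2‖ * ‖x‖ := (B ^ 2).le_opNorm x
        _ = ‖B * B‖ := by rw [hx, mul_one, pow_two]
        _ ≤ ‖B‖ * ‖B‖ := norm_mul_le _ _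
        _ ≤ (2 * ω) * (2 * ω) := mul_le_mul hBnorm hBnorm (norm_nonneg _) (by linarith)
        _ = 4 * ω ^ 2 := by ring
    have hC2x : ‖(C ^ 2) x‖ ≤ 4 * ω ^ 2 := by
      calc ‖(C ^ 2) x‖ ≤ ‖C ^ 2‖ * ‖x‖ := (C ^ 2).le_opNorm x
        _ = ‖C * C‖ := by rw [hx, mul_one, pow_two]
        _ ≤ ‖C‖ * ‖C‖ := norm_mul_le _ _
        _ ≤ (2 * ω) * (2 * ω) := mul_le_mul hCnorm hCnorm (norm_nonneg _) (by linarith)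
        _ = 4 * ω ^ 2 := by ring
    have hcross : |RCLike.re (inner ℂ ((B ^ 2) x) ((C ^ 2) x) : ℂ)| ≤ m := by
      have hC2sa : ContinuousLinearMap.adjoint (C ^ 2) = C ^ 2 := by
        rw [hstar, pow_two, star_mul, ← hstar, hCsa]
        simp [pow_two]
      have hmove : (inner ℂ ((B ^ 2) x) ((C ^ 2) x) : ℂ) =
          inner ℂ ((C ^ 2 * B ^ 2) x) x := by
        rw [ContinuousLinearMap.mul_apply, ← hC2sa, ContinuousLinearMap.adjoint_inner_left,
          hC2sa]
      calc |RCLike.re (inner ℂ ((B ^ 2) x) ((C ^ 2) x) : ℂ)|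
          ≤ ‖(inner ℂ ((B ^ 2) x) ((C ^ 2) x) : ℂ)‖ := RCLike.abs_re_le_norm _
        _ = ‖(inner ℂ ((C ^ 2 * B ^ 2) x) x : ℂ)‖ := by rw [hmove]
        _ ≤ m := inner_le_numericalRadius _ hx
    have hB2x' : ‖(B ^ 2) x‖ ^ 2 ≤ 16 * ω ^ 4 := by nlinarith [norm_nonneg ((B ^ 2) x)]
    have hC2x' : ‖(C ^ 2) x‖ ^ 2 ≤ 16 * ω ^ 4 := by nlinarith [norm_nonneg ((C ^ 2) x)]
    have habs := abs_le.mp hcross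
    have h4 : 4 * ‖S x‖ ^ 2 = ‖(B ^ 2) x - (C ^ 2) x‖ ^ 2 := by rw [h2]; ring
    linarith [h1, h3, h4, hB2x', hC2x', habs.1]
  -- norm bound for S
  have hSnorm : ‖S‖ ≤ Real.sqrt (8 * ω ^ 4 + m / 2) :=
    selfadjoint_norm_le S hSsa (Real.sqrt_nonneg _) hSval
  -- final arithmetic
  have hsqrt : Real.sqrt (8 * ω ^ 4 + m / 2) = 2 * Real.sqrt (2 * ω ^ 4 + m / 8) := by
    rw [show (8 * ω ^ 4 + m / 2 : ℝ) = 4 * (2 * ω ^ 4 + m / 8) by ring,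
      show (4 : ℝ) = 2 ^ 2 by norm_num, Real.sqrt_mul (by positivity),
      Real.sqrt_sq (by norm_num)]
  rw [hsqrt] at hSnorm
  have hfin : (1 / 8 : ℝ) * m = m / 8 := by ring
  rw [hfin]
  linarith [hSnorm]
end

section
/- Let H be a complex Hilbert space and A, B positive bounded linear operators on H. Then ‖A − B‖ ≤ max(‖A‖, ‖B‖) − min(m(A), m(B)), where m(T) = inf{⟨Tx, x⟩ : x ∈ H, ‖x‖ = 1}. -/
/-- `m(T) = inf { ⟨Tx, x⟩ : ‖x‖ = 1 }` (the real part of the quadratic form, which is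
`⟨Tx, x⟩` itself for self-adjoint `T`). -/
noncomputable def minQuadForm {H : Type*} [NormedAddCommGroup H] [InnerProductSpace ℂ H]
    [CompleteSpace H] (T : H →L[ℂ] H) : ℝ :=
  ⨅ x : {x : H // ‖x‖ = 1}, (inner ℂ (T x) (x : H) : ℂ).re

section Aux

variable {H : Type*} [NormedAddCommGroup H] [InnerProductSpace ℂ H] [CompleteSpace H]

open ContinuousLinearMap

lemma aux_algebraMap_nonneg (r : ℝ) (hr : 0 ≤ r) :
    (0 : H →L[ℂ] H) ≤ algebraMap ℝ (H →L[ℂ] H) r := by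
  rw [ContinuousLinearMap.nonneg_iff_isPositive]
  refine ⟨ContinuousLinearMap.isSelfAdjoint_iff_isSymmetric.mp (IsSelfAdjoint.algebraMap _ (isSelfAdjoint_iff.mpr rfl)), fun x => ?_⟩
  simp only [ContinuousLinearMap.reApplyInnerSelf, Algebra.algebraMap_eq_smul_one,
    ContinuousLinearMap.smul_apply, ContinuousLinearMap.one_apply]
  rw [RCLike.real_smul_eq_coe_smul (K := ℂ), inner_smul_left]
  simp [inner_self_eq_norm_sq]
  rw [← Complex.ofReal_pow, Complex.ofReal_re]
  positivity

lemma aux_algebraMap_mono {r s : ℝ} (h : r ≤ s) :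
    algebraMap ℝ (H →L[ℂ] H) r ≤ algebraMap ℝ (H →L[ℂ] H) s := by
  have := aux_algebraMap_nonneg (H := H) (s - r) (by linarith)
  rw [map_sub, sub_nonneg] at this
  exact this

lemma aux_bddBelow (A : H →L[ℂ] H) (hA : A.IsPositive) :
    BddBelow (Set.range fun x : {x : H // ‖x‖ = 1} => (inner ℂ (A x) (x : H) : ℂ).re) := by
  refine ⟨0, fun y hy => ?_⟩
  obtain ⟨x, rfl⟩ := hy
  exact hA.2 x

lemma aux_minQuadForm_nonneg (A : H →L[ℂ] H) (hA : A.IsPositive) : 0 ≤ minQuadForm A := by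
  exact Real.iInf_nonneg fun x => hA.2 x

lemma aux_minQuadForm_le (A : H →L[ℂ] H) (hA : A.IsPositive) :
    algebraMap ℝ (H →L[ℂ] H) (minQuadForm A) ≤ A := by
  rw [ContinuousLinearMap.le_def]
  constructor
  · exact (hA.1).sub (ContinuousLinearMap.isSelfAdjoint_iff_isSymmetric.mp (IsSelfAdjoint.algebraMap _ (isSelfAdjoint_iff.mpr rfl)))
  · intro x
    simp only [ContinuousLinearMap.reApplyInnerSelf, ContinuousLinearMap.sub_apply,
      Algebra.algebraMap_eq_smul_one, ContinuousLinearMap.smul_apply,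
      ContinuousLinearMap.one_apply, inner_sub_left]
    rw [RCLike.real_smul_eq_coe_smul (K := ℂ), inner_smul_left]
    simp only [map_sub, RCLike.conj_ofReal, RCLike.mul_re, RCLike.ofReal_re, RCLike.ofReal_im,
      zero_mul, sub_zero]
    rw [sub_nonneg]
    rcases eq_or_ne x 0 with rfl | hx
    · simp
    · set u : {x : H // ‖x‖ = 1} := ⟨‖x‖⁻¹ • x, by
        simp [norm_smul, inv_mul_cancel₀ (norm_ne_zero_iff.mpr hx)]⟩
      have h1 : minQuadForm A ≤ (inner ℂ (A u) (u : H) : ℂ).re :=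
        ciInf_le (aux_bddBelow A hA) u
      have h2 : (inner ℂ (A u) (u : H) : ℂ).re = ‖x‖⁻¹ ^ 2 * (inner ℂ (A x) x : ℂ).re := by
        show (inner ℂ (A (‖x‖⁻¹ • x)) ((‖x‖⁻¹ : ℝ) • x) : ℂ).re = _
        rw [RCLike.real_smul_eq_coe_smul (K := ℂ), map_smul, inner_smul_left, inner_smul_right]
        simp [RCLike.conj_ofReal, ← mul_assoc, ← Complex.ofReal_mul, pow_two]
      have hn : (0:ℝ) < ‖x‖ := norm_pos_iff.mpr hx
      have := mul_le_mul_of_nonneg_left (h2 ▸ h1) (sq_nonneg ‖x‖)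
      calc minQuadForm A * RCLike.re (inner ℂ x x : ℂ) = ‖x‖^2 * minQuadForm A := by
            rw [inner_self_eq_norm_sq]; ring
        _ ≤ ‖x‖^2 * (‖x‖⁻¹ ^ 2 * (inner ℂ (A x) x : ℂ).re) := by
            exact this
        _ = (inner ℂ (A x) x : ℂ).re := by
            field_simp



lemma aux_norm_le (T : H →L[ℂ] H) (hT : IsSelfAdjoint T) {c : ℝ} (hc : 0 ≤ c)
    (h1 : algebraMap ℝ (H →L[ℂ] H) (-c) ≤ T) (h2 : T ≤ algebraMap ℝ (H →L[ℂ] H) c) :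
    ‖T‖ ≤ c := by
  rcases subsingleton_or_nontrivial H with h | h
  · haveI : Subsingleton (H →L[ℂ] H) :=
      ⟨fun f g => ContinuousLinearMap.ext fun x => Subsingleton.elim _ _⟩
    rw [Subsingleton.elim T 0]
    simpa using hc
  · have hs1 := (le_algebraMap_iff_spectrum_le (R := ℝ) (a := T) hT).mp h2
    have hs2 := (algebraMap_le_iff_le_spectrum (R := ℝ) (a := T) hT).mp h1
    rcases CStarAlgebra.norm_or_neg_norm_mem_spectrum hT with hm | hm
    · exact hs1 _ hm
    · linarith [hs2 _ hm]

lemma aux_mqf_le_norm [Nontrivial H] (C : H →L[ℂ] H) (hC : C.IsPositive) :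
    minQuadForm C ≤ ‖C‖ := by
  obtain ⟨x, hx⟩ := exists_ne (0 : H)
  set u : {x : H // ‖x‖ = 1} := ⟨‖x‖⁻¹ • x, by
    simp [norm_smul, inv_mul_cancel₀ (norm_ne_zero_iff.mpr hx)]⟩
  have hu : ‖(u : H)‖ = 1 := u.2
  calc minQuadForm C ≤ (inner ℂ (C u) (u : H) : ℂ).re := ciInf_le (aux_bddBelow C hC) u
    _ ≤ ‖(inner ℂ (C u) (u : H) : ℂ)‖ := Complex.re_le_norm _
    _ ≤ ‖C u‖ * ‖(u : H)‖ := norm_inner_le_norm _ _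
    _ ≤ (‖C‖ * ‖(u : H)‖) * ‖(u : H)‖ := by
        gcongr; exact C.le_opNorm _
    _ = ‖C‖ := by rw [hu]; ring

end Aux

theorem norm_sub_le_max_norm_sub_min_inf
    {H : Type*} [NormedAddCommGroup H] [InnerProductSpace ℂ H] [CompleteSpace H]
    (A B : H →L[ℂ] H) (hA : A.IsPositive) (hB : B.IsPositive) :
    ‖A - B‖ ≤ max ‖A‖ ‖B‖ - min (minQuadForm A) (minQuadForm B) := by
  rcases subsingleton_or_nontrivial H with h | h
  · haveI : Subsingleton (H →L[ℂ] H) :=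
      ⟨fun f g => ContinuousLinearMap.ext fun x => Subsingleton.elim _ _⟩
    haveI : IsEmpty {x : H // ‖x‖ = 1} := ⟨fun x => by
      have := x.2; rw [Subsingleton.elim (x : H) 0] at this; simp at this⟩
    rw [Subsingleton.elim (A - B) 0, Subsingleton.elim A 0, Subsingleton.elim B 0]
    simp [minQuadForm, Real.iInf_of_isEmpty]
  · set m := min (minQuadForm A) (minQuadForm B) with hm
    set M := max ‖A‖ ‖B‖ with hM
    have hmA' : algebraMap ℝ (H →L[ℂ] H) m ≤ A :=
      le_trans (aux_algebraMap_mono (min_le_left _ _)) (aux_minQuadForm_le A hA)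
    have hmB' : algebraMap ℝ (H →L[ℂ] H) m ≤ B :=
      le_trans (aux_algebraMap_mono (min_le_right _ _)) (aux_minQuadForm_le B hB)
    have hAn : A ≤ algebraMap ℝ (H →L[ℂ] H) M :=
      le_trans hA.isSelfAdjoint.le_algebraMap_norm_self (aux_algebraMap_mono (le_max_left _ _))
    have hBn : B ≤ algebraMap ℝ (H →L[ℂ] H) M :=
      le_trans hB.isSelfAdjoint.le_algebraMap_norm_self (aux_algebraMap_mono (le_max_right _ _))
    have hmM : m ≤ M :=
      le_trans (min_le_left _ _) (le_trans (aux_mqf_le_norm A hA) (le_max_left _ _))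
    have h2 : A - B ≤ algebraMap ℝ (H →L[ℂ] H) (M - m) := by
      rw [map_sub]
      exact sub_le_sub hAn hmB'
    have h1 : algebraMap ℝ (H →L[ℂ] H) (-(M - m)) ≤ A - B := by
      rw [neg_sub, map_sub]
      exact sub_le_sub hmA' hBn
    exact aux_norm_le _ (hA.isSelfAdjoint.sub hB.isSelfAdjoint) (by linarith) h1 h2
end

section
/- Let H be a complex Hilbert space and A a bounded linear operator on H. Then for any real r ≥ 2: ω(A)^r ≤ (1/2)·‖ |A|^r + |A*|^r + |A|^{r/2} + |A*|^{r/2} + I − sqrt(2(|A|^r + |A*|^r + |A|^{r/2} + |A*|^{r/2}) + I) ‖ ≤ (1/2)·‖ |A|^r + |A*|^r ‖, where |A| = (A*A)^{1/2}, |A*| = (AA*)^{1/2}, I is the identity operator, powers and square roots of positive operators are taken via the continuous functional calculus. -/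
/-- The absolute value `|A| = (A*A)^(1/2)` of a bounded operator, via the square root
from the continuous functional calculus. -/
noncomputable def opAbs {H : Type*} [NormedAddCommGroup H] [InnerProductSpace ℂ H]
    [CompleteSpace H] (A : H →L[ℂ] H) : H →L[ℂ] H :=
  CFC.sqrt (ContinuousLinearMap.adjoint A * A)




open scoped InnerProductSpace
open Polynomial

section Aux

set_option synthInstance.maxHeartbeats 1000000
set_option maxHeartbeats 1000000

variable {H : Type*} [NormedAddCommGroup H] [InnerProductSpace ℂ H] [CompleteSpace H]

/-! ### Scalar auxiliary function `g(t) = t + 1 - √(2t+1)` -/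

noncomputable def gAux (t : ℝ) : ℝ := t + 1 - Real.sqrt (2*t+1)

lemma gAux_cont : Continuous gAux :=
  (continuous_id.add continuous_const).sub (Real.continuous_sqrt.comp (by continuity))

lemma gAux_nonneg {t : ℝ} (ht : 0 ≤ t) : 0 ≤ gAux t := by
  have h := Real.sqrt_le_sqrt (show 2*t+1 ≤ (t+1)^2 by nlinarith)
  rw [Real.sqrt_sq (by linarith)] at h
  unfold gAux; linarith

lemma gAux_mono {a b : ℝ} (ha : 0 ≤ a) (hab : a ≤ b) : gAux a ≤ gAux b := by
  have h2a := Real.sq_sqrt (show (0:ℝ) ≤ 2*a+1 by linarith)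
  have h2b := Real.sq_sqrt (show (0:ℝ) ≤ 2*b+1 by linarith)
  have h1a : 1 ≤ Real.sqrt (2*a+1) := by
    have := Real.sqrt_le_sqrt (show (1:ℝ) ≤ 2*a+1 by linarith)
    rwa [Real.sqrt_one] at this
  have h1b : 1 ≤ Real.sqrt (2*b+1) := by
    have := Real.sqrt_le_sqrt (show (1:ℝ) ≤ 2*b+1 by linarith)
    rwa [Real.sqrt_one] at this
  have hXY : Real.sqrt (2*a+1) ≤ Real.sqrt (2*b+1) := Real.sqrt_le_sqrt (by linarith)
  unfold gAux
  nlinarith [mul_nonneg (sub_nonneg.2 hXY)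
    (show (0:ℝ) ≤ Real.sqrt (2*b+1) + Real.sqrt (2*a+1) - 2 by linarith)]

lemma gAux_prod {p q : ℝ} (hp : 0 ≤ p) (hq : 0 ≤ q) : p*q ≤ (1/2) * gAux (p^2+q^2+p+q) := by
  set w := p^2+q^2+p+q with hw
  have hnn : 0 ≤ w + 1 - 2*(p*q) := by nlinarith [sq_nonneg (p-q)]
  have hsq : 2*w+1 ≤ (w + 1 - 2*(p*q))^2 := by
    nlinarith [sq_nonneg ((p-q)^2), mul_nonneg (mul_nonneg (sub_nonneg.2 (le_refl p)) hq) hp,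
      mul_nonneg (sq_nonneg (p-q)) (add_nonneg hp hq), sq_nonneg (p-q)]
  have hrhs : Real.sqrt (2*w+1) ≤ w + 1 - 2*(p*q) := by
    calc Real.sqrt (2*w+1) ≤ Real.sqrt ((w + 1 - 2*(p*q))^2) := Real.sqrt_le_sqrt hsq
      _ = |w + 1 - 2*(p*q)| := Real.sqrt_sq_eq_abs _
      _ = w + 1 - 2*(p*q) := abs_of_nonneg hnn
  unfold gAux; linarith

lemma gAux_le {x t s : ℝ} (hx0 : 0 ≤ x) (ht : 0 ≤ t) (hs : 0 ≤ s)
    (hxts : x ≤ t + s) (hst : s^2 ≤ 2*t) : gAux x ≤ t := by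
  have h1 : gAux x ≤ gAux (t+s) := gAux_mono hx0 hxts
  have h2 : s + 1 ≤ Real.sqrt (2*(t+s)+1) := by
    have hsq : (s+1)^2 ≤ 2*(t+s)+1 := by nlinarith
    calc s+1 = Real.sqrt ((s+1)^2) := (Real.sqrt_sq (by linarith)).symm
      _ ≤ Real.sqrt (2*(t+s)+1) := Real.sqrt_le_sqrt hsq
  unfold gAux at h1 ⊢
  linarith

/-! ### Inner product helpers -/

lemma re_inner_real_smul' (α : ℝ) (y x : H) :
    RCLike.re ⟪α • y, x⟫_ℂ = α * RCLike.re ⟪y, x⟫_ℂ := by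
  rw [show α • y = (α : ℂ) • y from by simp [Complex.real_smul], inner_smul_left]
  simp

lemma inner_re_nonneg' {P : H →L[ℂ] H} (hP : 0 ≤ P) (x : H) : 0 ≤ RCLike.re ⟪P x, x⟫_ℂ :=
  (RCLike.nonneg_iff.mp (((ContinuousLinearMap.nonneg_iff_isPositive P).mp hP).inner_nonneg_left x)).1

lemma inner_re_mono' {T₁ T₂ : H →L[ℂ] H} (h : T₁ ≤ T₂) (x : H) :
    RCLike.re ⟪T₁ x, x⟫_ℂ ≤ RCLike.re ⟪T₂ x, x⟫_ℂ := by
  have h' := (ContinuousLinearMap.le_def T₁ T₂).mp h |>.inner_nonneg_left x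
  rw [ContinuousLinearMap.sub_apply, inner_sub_left] at h'
  have h'' := (RCLike.nonneg_iff.mp h').1
  rw [map_sub] at h''
  linarith

lemma re_inner_algebraMap' (α : ℝ) (x : H) (hx : ‖x‖ = 1) :
    RCLike.re ⟪(algebraMap ℝ (H →L[ℂ] H) α) x, x⟫_ℂ = α := by
  rw [Algebra.algebraMap_eq_smul_one, ContinuousLinearMap.smul_apply,
    ContinuousLinearMap.one_apply, re_inner_real_smul', inner_self_eq_norm_sq, hx]
  ring

lemma inner_re_le_norm' (P : H →L[ℂ] H) (x : H) (hx : ‖x‖ = 1) :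
    RCLike.re ⟪P x, x⟫_ℂ ≤ ‖P‖ := by
  calc RCLike.re ⟪P x, x⟫_ℂ ≤ ‖⟪P x, x⟫_ℂ‖ := RCLike.re_le_norm _
    _ ≤ ‖P x‖ * ‖x‖ := norm_inner_le_norm _ _
    _ ≤ (‖P‖ * ‖x‖) * ‖x‖ := by gcongr; exact P.le_opNorm x
    _ = ‖P‖ := by rw [hx]; ring

/-! ### cfc helpers -/

lemma contOn_rpow (s : ℝ) (hs : 0 < s) (K : Set ℝ) : ContinuousOn (fun t : ℝ => t ^ s) K :=
  fun t _ => (Real.continuousAt_rpow_const t s (Or.inr hs.le)).continuousWithinAt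

lemma cfc_affine (P : H →L[ℂ] H) (hP : IsSelfAdjoint P) (α β : ℝ) :
    cfc (fun t : ℝ => α + β * t) P = algebraMap ℝ _ α + β • P := by
  rw [cfc_add (a := P) (fun _ => α) (fun t => β * t), cfc_const α P,
    show (fun t : ℝ => β * t) = (β * ·) from rfl, cfc_const_mul_id β P]

lemma cfc_two_mul_add_one (X : H →L[ℂ] H) (hX : IsSelfAdjoint X) :
    cfc (fun t : ℝ => 2 * t + 1) X = 2 • X + 1 := by
  have h : (fun t : ℝ => 2 * t + 1) = fun t : ℝ => (1 : ℝ) + 2 * t := by funext t; ring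
  rw [h, cfc_affine X hX 1 2, two_smul, two_smul]
  simp [Algebra.algebraMap_eq_smul_one]
  abel

lemma sqrt_two_smul_add_one (X : H →L[ℂ] H) (hX : 0 ≤ X) :
    CFC.sqrt (2 • X + 1) = cfc (fun t : ℝ => Real.sqrt (2 * t + 1)) X := by
  have hXsa : IsSelfAdjoint X := hX.isSelfAdjoint
  have hb : (0:H →L[ℂ] H) ≤ cfc (fun t : ℝ => Real.sqrt (2 * t + 1)) X :=
    cfc_nonneg fun t _ => Real.sqrt_nonneg _
  have hmul : cfc (fun t : ℝ => Real.sqrt (2 * t + 1)) X * cfc (fun t : ℝ => Real.sqrt (2 * t + 1)) X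
      = 2 • X + 1 := by
    rw [← cfc_mul _ _ X]
    have h1 : cfc (fun t : ℝ => Real.sqrt (2*t+1) * Real.sqrt (2*t+1)) X
        = cfc (fun t : ℝ => 2 * t + 1) X := by
      refine cfc_congr fun t ht => ?_
      have ht0 := spectrum_nonneg_of_nonneg hX ht
      exact Real.mul_self_sqrt (by linarith)
    rw [h1, cfc_two_mul_add_one X hXsa]
  exact CFC.sqrt_unique hmul hb

lemma sqrt_eq_cfc_real_sqrt {P : H →L[ℂ] H} (hP : 0 ≤ P) : CFC.sqrt P = cfc Real.sqrt P := by
  refine CFC.sqrt_unique ?_ (cfc_nonneg fun t _ => Real.sqrt_nonneg t)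
  rw [← cfc_mul _ _ P (by fun_prop) (by fun_prop)]
  have h1 : cfc (fun t => Real.sqrt t * Real.sqrt t) P = cfc (fun t : ℝ => t) P :=
    cfc_congr fun t ht => Real.mul_self_sqrt (spectrum_nonneg_of_nonneg hP ht)
  rw [h1, cfc_id' ℝ P]

/-! ### The commutation lemma `a · f(a*a) = f(aa*) · a` -/

lemma pow_comm_aux (a : H →L[ℂ] H) (n : ℕ) :
    a * (star a * a) ^ n = (a * star a) ^ n * a := by
  induction n with
  | zero => simp
  | succ n ih =>
    rw [pow_succ, ← mul_assoc, ih, pow_succ]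
    rw [mul_assoc, mul_assoc, mul_assoc]

lemma poly_comm_aux (a : H →L[ℂ] H) (p : ℝ[X]) :
    a * aeval (star a * a) p = aeval (a * star a) p * a := by
  induction p using Polynomial.induction_on' with
  | add p q hp hq => simp only [map_add, mul_add, add_mul, hp, hq]
  | monomial n r =>
    simp only [aeval_monomial]
    rw [← mul_assoc, ← Algebra.commutes r a, mul_assoc, pow_comm_aux, ← mul_assoc]

lemma cfc_comm_star_mul (a : H →L[ℂ] H) (f : ℝ → ℝ) (hf : Continuous f) :
    a * cfc f (star a * a) = cfc f (a * star a) * a := by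
  obtain hH | hH := subsingleton_or_nontrivial H
  · have : Subsingleton (H →L[ℂ] H) := ⟨fun x y => ContinuousLinearMap.ext fun v => Subsingleton.elim _ _⟩
    exact Subsingleton.elim _ _
  set b := star a * a with hb
  set c := a * star a with hc
  have hbsa : IsSelfAdjoint b := IsSelfAdjoint.star_mul_self a
  have hcsa : IsSelfAdjoint c := hc ▸ IsSelfAdjoint.mul_star_self a
  set M : ℝ := max ‖b‖ ‖c‖ with hM
  have hσb : spectrum ℝ b ⊆ Set.Icc (-M) M := by
    intro t ht
    have := spectrum.norm_le_norm_of_mem ht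
    rw [Real.norm_eq_abs, abs_le] at this
    constructor <;> [linarith [le_max_left ‖b‖ ‖c‖]; linarith [le_max_left ‖b‖ ‖c‖]]
  have hσc : spectrum ℝ c ⊆ Set.Icc (-M) M := by
    intro t ht
    have := spectrum.norm_le_norm_of_mem ht
    rw [Real.norm_eq_abs, abs_le] at this
    constructor <;> [linarith [le_max_right ‖b‖ ‖c‖]; linarith [le_max_right ‖b‖ ‖c‖]]
  rw [← sub_eq_zero, ← norm_le_zero_iff]
  refine le_of_forall_pos_le_add fun δ hδ => ?_
  have hε : (0:ℝ) < δ / (2 * ‖a‖ + 1) := by positivity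
  obtain ⟨p, hp⟩ := exists_polynomial_near_of_continuousOn (-M) M f hf.continuousOn _ hε
  have happrox : ∀ (x : H →L[ℂ] H), IsSelfAdjoint x → spectrum ℝ x ⊆ Set.Icc (-M) M →
      ‖cfc f x - cfc p.eval x‖ ≤ δ / (2 * ‖a‖ + 1) := by
    intro x hx hσ
    rw [← cfc_sub (f) (p.eval) x hf.continuousOn (p.continuous_aeval).continuousOn]
    refine norm_cfc_le hε.le fun t ht => ?_
    rw [Real.norm_eq_abs, abs_sub_comm]
    exact (hp t (hσ ht)).le
  have hkey : a * cfc p.eval b = cfc p.eval c * a := by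
    rw [cfc_polynomial p b, cfc_polynomial p c, poly_comm_aux]
  have decomp : a * cfc f b - cfc f c * a =
      a * (cfc f b - cfc p.eval b) + (cfc p.eval c - cfc f c) * a := by
    rw [mul_sub, sub_mul, hkey]; abel
  rw [decomp]
  calc ‖a * (cfc f b - cfc p.eval b) + (cfc p.eval c - cfc f c) * a‖
      ≤ ‖a * (cfc f b - cfc p.eval b)‖ + ‖(cfc p.eval c - cfc f c) * a‖ := norm_add_le _ _
    _ ≤ ‖a‖ * (δ / (2 * ‖a‖ + 1)) + (δ / (2 * ‖a‖ + 1)) * ‖a‖ := by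
        gcongr
        · exact (norm_mul_le _ _).trans (by gcongr; exact happrox b hbsa hσb)
        · refine (norm_mul_le _ _).trans ?_
          gcongr
          rw [← norm_neg, neg_sub]
          exact happrox c hcsa hσc
    _ = (2 * ‖a‖) * δ / (2 * ‖a‖ + 1) := by ring
    _ ≤ δ := by
        rw [div_le_iff₀ (by positivity : (0:ℝ) < 2 * ‖a‖ + 1)]
        nlinarith [norm_nonneg a]
    _ ≤ 0 + δ := by simp

/-- Hölder–McCarthy inequality via the tangent-line trick. -/
lemma holder_mccarthy (P : H →L[ℂ] H) (hP : 0 ≤ P) (x : H) (hx : ‖x‖ = 1)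
    (s : ℝ) (hs : 1 ≤ s) :
    (RCLike.re ⟪P x, x⟫_ℂ) ^ s ≤ RCLike.re ⟪cfc (fun t : ℝ => t ^ s) P x, x⟫_ℂ := by
  have hs0 : (0:ℝ) < s := lt_of_lt_of_le one_pos hs
  have hc : 0 ≤ RCLike.re ⟪P x, x⟫_ℂ := inner_re_nonneg' hP x
  set c := RCLike.re ⟪P x, x⟫_ℂ with hcdef
  have hRHS0 : 0 ≤ RCLike.re ⟪cfc (fun t : ℝ => t ^ s) P x, x⟫_ℂ :=
    inner_re_nonneg' (cfc_nonneg fun t ht => Real.rpow_nonneg (spectrum_nonneg_of_nonneg hP ht) s) x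
  rcases eq_or_lt_of_le hc with h0 | hcpos
  · rw [← h0, Real.zero_rpow (ne_of_gt hs0)]
    exact hRHS0
  · set α := c ^ s - s * c^(s-1) * c with hα
    set β := s * c^(s-1) with hβ
    have key : ∀ t ∈ spectrum ℝ P, α + β * t ≤ t ^ s := by
      intro t ht
      have ht0 : 0 ≤ t := spectrum_nonneg_of_nonneg hP ht
      have h1 : 1 + s * (t/c - 1) ≤ (1 + (t/c - 1)) ^ s :=
        one_add_mul_self_le_rpow_one_add (by
          have : 0 ≤ t / c := div_nonneg ht0 hcpos.le
          linarith) hs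
      rw [show (1 + (t/c - 1)) = t/c by ring] at h1
      have hcs : (0:ℝ) < c ^ s := Real.rpow_pos_of_pos hcpos s
      have h3 : (t/c) ^ s = t^s / c^s := Real.div_rpow ht0 hcpos.le s
      have h4 : c^(s-1) = c^s / c := by rw [Real.rpow_sub hcpos, Real.rpow_one]
      have h5 := mul_le_mul_of_nonneg_left h1 hcs.le
      rw [h3] at h5
      have h6 : c^s * (t^s / c^s) = t^s := by field_simp
      rw [h6] at h5
      have h7 : c^s * (1 + s*(t/c - 1)) = c^s + s * (c^s/c) * t - s * (c^s/c) * c := by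
        field_simp; ring
      rw [hα, hβ, h4]
      linarith [h7 ▸ h5]
    have hop : cfc (fun t : ℝ => α + β * t) P ≤ cfc (fun t : ℝ => t ^ s) P :=
      cfc_mono key (by fun_prop) (contOn_rpow s hs0 _)
    have hin := inner_re_mono' hop x
    rw [cfc_affine P hP.isSelfAdjoint α β] at hin
    rw [ContinuousLinearMap.add_apply, inner_add_left, map_add, re_inner_algebraMap' α x hx,
      ContinuousLinearMap.smul_apply, re_inner_real_smul'] at hin
    have h8 : c^(s-1) * c = c^s := by
      rw [Real.rpow_sub hcpos, Real.rpow_one]; field_simp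
    have : α + β * c = c ^ s := by rw [hα, hβ]; nlinarith [h8]
    linarith

/-- Mixed Schwarz inequality. -/
lemma mixed_schwarz (A : H →L[ℂ] H) (x : H) (hx : ‖x‖ = 1) :
    ‖⟪A x, x⟫_ℂ‖ ^ 2 ≤ RCLike.re ⟪cfc Real.sqrt (star A * A) x, x⟫_ℂ *
      RCLike.re ⟪cfc Real.sqrt (A * star A) x, x⟫_ℂ := by
  set P := star A * A with hPdef
  set Q := A * star A with hQdef
  have hP : (0:H→L[ℂ]H) ≤ P := star_mul_self_nonneg A
  have hQ : (0:H→L[ℂ]H) ≤ Q := mul_star_self_nonneg A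
  have hPsa : IsSelfAdjoint P := hP.isSelfAdjoint
  have hQsa : IsSelfAdjoint Q := hQ.isSelfAdjoint
  set u := RCLike.re ⟪cfc Real.sqrt P x, x⟫_ℂ with hu_def
  set v := RCLike.re ⟪cfc Real.sqrt Q x, x⟫_ℂ with hv_def
  have hu : 0 ≤ u := inner_re_nonneg' (cfc_nonneg fun t _ => Real.sqrt_nonneg t) x
  have hv : 0 ≤ v := inner_re_nonneg' (cfc_nonneg fun t _ => Real.sqrt_nonneg t) x
  have main : ∀ ε : ℝ, 0 < ε → ‖⟪A x, x⟫_ℂ‖ ^ 2 ≤ (u + ε) * v := by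
    intro ε hε
    have hden : ∀ t : ℝ, 0 < Real.sqrt t + ε := fun t => by positivity
    set fg : ℝ → ℝ := fun t => (Real.sqrt t + ε)⁻¹ with hfg_def
    set fe : ℝ → ℝ := fun t => Real.sqrt t + ε with hfe_def
    have hfg_cont : Continuous fg := (Real.continuous_sqrt.add continuous_const).inv₀ fun t => (hden t).ne'
    have hfe_cont : Continuous fe := Real.continuous_sqrt.add continuous_const
    set G := cfc fg P with hG_def
    have hGsa : IsSelfAdjoint G := cfc_predicate _ P
    set B := A * G with hB_def
    set D := cfc fe P with hD_def
    set E := cfc (fun t => Real.sqrt (fe t)) P with hE_def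
    have hEsa : IsSelfAdjoint E := cfc_predicate _ P
    have hEE : E * E = D := by
      rw [hE_def, hD_def, ← cfc_mul _ _ P (by fun_prop) (by fun_prop)]
      exact cfc_congr fun t _ => Real.mul_self_sqrt (hden t).le
    have hAeq : A = B * E * E := by
      rw [mul_assoc, hEE, hB_def, hD_def, mul_assoc,
        ← cfc_mul _ _ P (by fun_prop) (by fun_prop)]
      have h1 : cfc (fun t => fg t * fe t) P = cfc (fun _ : ℝ => (1:ℝ)) P :=
        cfc_congr fun t _ => inv_mul_cancel₀ (hden t).ne'
      rw [h1, cfc_const 1 P, map_one, mul_one]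
    have hinner : ⟪A x, x⟫_ℂ = ⟪E x, ContinuousLinearMap.adjoint (B * E) x⟫_ℂ := by
      conv_lhs => rw [hAeq]
      rw [ContinuousLinearMap.adjoint_inner_right (B * E) (E x) x]
      rfl
    have hCS : ‖⟪A x, x⟫_ℂ‖ ^ 2 ≤ ‖E x‖^2 * ‖ContinuousLinearMap.adjoint (B * E) x‖^2 := by
      rw [hinner, ← mul_pow]
      exact pow_le_pow_left₀ (norm_nonneg _)
        (norm_inner_le_norm (𝕜 := ℂ) (E x) (ContinuousLinearMap.adjoint (B * E) x)) 2
    have hEadj : ContinuousLinearMap.adjoint E = E := by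
      rw [← ContinuousLinearMap.star_eq_adjoint, hEsa.star_eq]
    have hEx : ‖E x‖^2 = u + ε := by
      have h1 : ⟪D x, x⟫_ℂ = ⟪E x, E x⟫_ℂ := by
        rw [← hEE, show (E * E) x = E (E x) from rfl,
          ← ContinuousLinearMap.adjoint_inner_right E (E x) x, hEadj]
      have h2 : ‖E x‖^2 = RCLike.re ⟪D x, x⟫_ℂ := by rw [h1, inner_self_eq_norm_sq]
      have h3 : D = cfc Real.sqrt P + algebraMap ℝ (H→L[ℂ]H) ε := by
        rw [hD_def, hfe_def, cfc_add (a := P) Real.sqrt (fun _ => ε) (by fun_prop) (by fun_prop),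
          cfc_const ε P]
      rw [h2, h3, ContinuousLinearMap.add_apply, inner_add_left, map_add,
        Algebra.algebraMap_eq_smul_one, ContinuousLinearMap.smul_apply,
        ContinuousLinearMap.one_apply, re_inner_real_smul', inner_self_eq_norm_sq, hx]
      ring
    set y := ContinuousLinearMap.adjoint (B * E) x with hy
    have hAdx : ‖y‖^2 ≤ v := by
      have h1 : ⟪((B * E) * ContinuousLinearMap.adjoint (B * E)) x, x⟫_ℂ = ⟪y, y⟫_ℂ := by
        rw [show ((B * E) * ContinuousLinearMap.adjoint (B * E)) x = (B * E) y from rfl,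
          ← ContinuousLinearMap.adjoint_inner_right (B * E) y x]
      have h2 : ‖y‖^2 = RCLike.re ⟪((B * E) * ContinuousLinearMap.adjoint (B * E)) x, x⟫_ℂ := by
        rw [h1, inner_self_eq_norm_sq]
      have hstar : ContinuousLinearMap.adjoint (B * E) = E * (G * star A) := by
        rw [← ContinuousLinearMap.star_eq_adjoint, hB_def, star_mul, star_mul,
          hEsa.star_eq, hGsa.star_eq]
      set m : ℝ → ℝ := fun t => fg t * (fe t * fg t) with hm_def
      have hm_cont : Continuous m := by fun_prop
      have hGDG : G * (D * G) = cfc m P := by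
        rw [hm_def, hG_def, hD_def, cfc_mul fg (fun t => fe t * fg t) P (by fun_prop) (by fun_prop),
          cfc_mul fe fg P (by fun_prop) (by fun_prop)]
      have hF : (B * E) * ContinuousLinearMap.adjoint (B * E)
          = cfc (fun t => m t * t) Q := by
        rw [hstar, hB_def]
        have e1 : A * G * E * (E * (G * star A)) = A * ((G * (D * G)) * star A) := by
          rw [← hEE]; simp only [mul_assoc]
        rw [e1, hGDG, ← mul_assoc, cfc_comm_star_mul A m hm_cont, mul_assoc, ← hQdef]
        have e6 : cfc (fun t => m t * t) Q = cfc m Q * Q := by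
          rw [cfc_mul m (fun t => t) Q hm_cont.continuousOn (by fun_prop), cfc_id' ℝ Q]
        rw [e6]
      have hle : cfc (fun t => m t * t) Q ≤ cfc Real.sqrt Q := by
        refine cfc_mono (fun t ht => ?_) (by fun_prop) Real.continuous_sqrt.continuousOn
        have ht0 : 0 ≤ t := spectrum_nonneg_of_nonneg hQ ht
        have hfe_fg : fe t * fg t = 1 := mul_inv_cancel₀ (hden t).ne'
        have : m t * t = t * (Real.sqrt t + ε)⁻¹ := by
          rw [hm_def]
          show fg t * (fe t * fg t) * t = _; rw [hfe_fg, mul_one]; simp only [hfg_def]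
          ring
        rw [this, ← div_eq_mul_inv, div_le_iff₀ (hden t)]
        nlinarith [Real.sq_sqrt ht0, Real.sqrt_nonneg t]
      rw [h2, hF]
      exact inner_re_mono' hle x
    calc ‖⟪A x, x⟫_ℂ‖ ^ 2 ≤ ‖E x‖^2 * ‖y‖^2 := hCS
      _ ≤ (u + ε) * v := by
          rw [hEx]
          exact mul_le_mul_of_nonneg_left hAdx (by linarith)
  refine le_of_forall_pos_le_add fun δ hδ => ?_
  have hε : (0:ℝ) < δ / (v + 1) := by positivity
  calc ‖⟪A x, x⟫_ℂ‖ ^ 2 ≤ (u + δ/(v+1)) * v := main _ hε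
    _ = u * v + δ * (v/(v+1)) := by ring
    _ ≤ u * v + δ := by
        have h9 : v / (v+1) ≤ 1 := by
          rw [div_le_one (by linarith)]; linarith
        nlinarith

end Aux

set_option synthInstance.maxHeartbeats 1000000 in
set_option maxHeartbeats 1000000 in
theorem numericalRadius_rpow_le
    {H : Type*} [NormedAddCommGroup H] [InnerProductSpace ℂ H] [CompleteSpace H]
    (A : H →L[ℂ] H) (r : ℝ) (hr : 2 ≤ r) :
    numericalRadius A ^ r ≤
        (1 / 2) * ‖cfc (fun x : ℝ => x ^ r) (opAbs A) +
          cfc (fun x : ℝ => x ^ r) (opAbs (ContinuousLinearMap.adjoint A)) +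
          cfc (fun x : ℝ => x ^ (r / 2)) (opAbs A) +
          cfc (fun x : ℝ => x ^ (r / 2)) (opAbs (ContinuousLinearMap.adjoint A)) + 1 -
          CFC.sqrt (2 • (cfc (fun x : ℝ => x ^ r) (opAbs A) +
            cfc (fun x : ℝ => x ^ r) (opAbs (ContinuousLinearMap.adjoint A)) +
            cfc (fun x : ℝ => x ^ (r / 2)) (opAbs A) +
            cfc (fun x : ℝ => x ^ (r / 2)) (opAbs (ContinuousLinearMap.adjoint A))) + 1)‖ ∧
      (1 / 2) * ‖cfc (fun x : ℝ => x ^ r) (opAbs A) +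
          cfc (fun x : ℝ => x ^ r) (opAbs (ContinuousLinearMap.adjoint A)) +
          cfc (fun x : ℝ => x ^ (r / 2)) (opAbs A) +
          cfc (fun x : ℝ => x ^ (r / 2)) (opAbs (ContinuousLinearMap.adjoint A)) + 1 -
          CFC.sqrt (2 • (cfc (fun x : ℝ => x ^ r) (opAbs A) +
            cfc (fun x : ℝ => x ^ r) (opAbs (ContinuousLinearMap.adjoint A)) +
            cfc (fun x : ℝ => x ^ (r / 2)) (opAbs A) +
            cfc (fun x : ℝ => x ^ (r / 2)) (opAbs (ContinuousLinearMap.adjoint A))) + 1)‖ ≤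
        (1 / 2) * ‖cfc (fun x : ℝ => x ^ r) (opAbs A) +
          cfc (fun x : ℝ => x ^ r) (opAbs (ContinuousLinearMap.adjoint A))‖ := by
  have hr0 : (0:ℝ) < r := by linarith
  have hr1 : (1:ℝ) ≤ r := by linarith
  have hr2 : (1:ℝ) ≤ r / 2 := by linarith
  have hr20 : (0:ℝ) < r / 2 := by linarith
  obtain hH | hH := subsingleton_or_nontrivial H
  · -- trivial Hilbert space
    have hsub : Subsingleton (H →L[ℂ] H) :=
      ⟨fun f g => ContinuousLinearMap.ext fun v => Subsingleton.elim _ _⟩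
    have hE : IsEmpty {x : H // ‖x‖ = 1} := by
      refine ⟨fun z => ?_⟩
      have h0 : (z : H) = 0 := Subsingleton.elim _ _
      have hz := z.2
      rw [h0, norm_zero] at hz
      exact absurd hz (by norm_num)
    have hnr : numericalRadius A = 0 := by
      rw [numericalRadius]
      exact Real.iSup_of_isEmpty _
    have hz : ∀ Z : H →L[ℂ] H, ‖Z‖ = 0 := fun Z => by
      rw [Subsingleton.elim Z 0, norm_zero]
    constructor
    · rw [hnr, Real.zero_rpow hr0.ne', hz]
      norm_num
    · rw [hz, hz]
  -- nontrivial case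
  haveI : Nontrivial (H →L[ℂ] H) :=
    ⟨0, 1, fun h => by simpa using congrArg norm h⟩
  set P : H →L[ℂ] H := star A * A with hPdef
  set Q : H →L[ℂ] H := A * star A with hQdef
  have hP : (0 : H →L[ℂ] H) ≤ P := star_mul_self_nonneg A
  have hQ : (0 : H →L[ℂ] H) ≤ Q := mul_star_self_nonneg A
  have ha1 : opAbs A = cfc Real.sqrt P := by
    rw [opAbs, ← ContinuousLinearMap.star_eq_adjoint]
    exact sqrt_eq_cfc_real_sqrt hP
  have ha2 : opAbs (ContinuousLinearMap.adjoint A) = cfc Real.sqrt Q := by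
    rw [opAbs, ContinuousLinearMap.adjoint_adjoint, ← ContinuousLinearMap.star_eq_adjoint]
    exact sqrt_eq_cfc_real_sqrt hQ
  set a1 : H →L[ℂ] H := opAbs A with ha1def
  set a2 : H →L[ℂ] H := opAbs (ContinuousLinearMap.adjoint A) with ha2def
  have ha1nn : (0:H →L[ℂ] H) ≤ a1 := ha1 ▸ cfc_nonneg (fun t _ => Real.sqrt_nonneg t)
  have ha2nn : (0:H →L[ℂ] H) ≤ a2 := ha2 ▸ cfc_nonneg (fun t _ => Real.sqrt_nonneg t)
  set T1 : H →L[ℂ] H := cfc (fun x : ℝ => x ^ r) a1 with hT1def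
  set T2 : H →L[ℂ] H := cfc (fun x : ℝ => x ^ r) a2 with hT2def
  set S1 : H →L[ℂ] H := cfc (fun x : ℝ => x ^ (r/2)) a1 with hS1def
  set S2 : H →L[ℂ] H := cfc (fun x : ℝ => x ^ (r/2)) a2 with hS2def
  set X : H →L[ℂ] H := T1 + T2 + S1 + S2 with hXdef
  have hT1nn : (0:H →L[ℂ] H) ≤ T1 :=
    cfc_nonneg fun t ht => Real.rpow_nonneg (spectrum_nonneg_of_nonneg ha1nn ht) r
  have hT2nn : (0:H →L[ℂ] H) ≤ T2 :=
    cfc_nonneg fun t ht => Real.rpow_nonneg (spectrum_nonneg_of_nonneg ha2nn ht) r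
  have hS1nn : (0:H →L[ℂ] H) ≤ S1 :=
    cfc_nonneg fun t ht => Real.rpow_nonneg (spectrum_nonneg_of_nonneg ha1nn ht) (r/2)
  have hS2nn : (0:H →L[ℂ] H) ≤ S2 :=
    cfc_nonneg fun t ht => Real.rpow_nonneg (spectrum_nonneg_of_nonneg ha2nn ht) (r/2)
  have hXnn : (0:H →L[ℂ] H) ≤ X :=
    add_nonneg (add_nonneg (add_nonneg hT1nn hT2nn) hS1nn) hS2nn
  have hXsa : IsSelfAdjoint X := hXnn.isSelfAdjoint
  -- identify the middle operator as `gAux` applied to `X`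
  have hM : X + 1 - CFC.sqrt (2 • X + 1) = cfc gAux X := by
    rw [sqrt_two_smul_add_one X hXnn]
    have h1 : cfc gAux X
        = cfc (fun t : ℝ => t + 1) X - cfc (fun t : ℝ => Real.sqrt (2*t+1)) X := by
      rw [← cfc_sub (fun t : ℝ => t + 1) (fun t : ℝ => Real.sqrt (2*t+1)) X
        (by fun_prop) (by fun_prop)]
      rfl
    have h2 : cfc (fun t : ℝ => t + 1) X = X + 1 := by
      rw [cfc_add (a := X) (fun t : ℝ => t) (fun _ => (1:ℝ)), cfc_id' ℝ X, cfc_const 1 X, map_one]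
    rw [h1, h2]
  rw [hM]
  have hMnn : (0:H →L[ℂ] H) ≤ cfc gAux X :=
    cfc_nonneg fun t ht => gAux_nonneg (spectrum_nonneg_of_nonneg hXnn ht)
  have hgX_le_normM : gAux ‖X‖ ≤ ‖cfc gAux X‖ := by
    have hmem : ‖X‖ ∈ spectrum ℝ X := CStarAlgebra.norm_mem_spectrum_of_nonneg hXnn
    have hmem2 : gAux ‖X‖ ∈ spectrum ℝ (cfc gAux X) := by
      rw [cfc_map_spectrum (a := X) (f := gAux) hXsa gAux_cont.continuousOn]
      exact Set.mem_image_of_mem _ hmem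
    exact le_trans (le_abs_self _) (by simpa using spectrum.norm_le_norm_of_mem hmem2)
  constructor
  · -- FIRST INEQUALITY
    set c : ℝ := (1/2) * ‖cfc gAux X‖ with hcdef
    have hc0 : 0 ≤ c := by positivity
    have key : ∀ z : {x : H // ‖x‖ = 1}, ‖(⟪A z, (z : H)⟫_ℂ)‖ ^ r ≤ c := by
      rintro ⟨x, hx⟩
      set n : ℝ := ‖⟪A x, x⟫_ℂ‖ with hndef
      have hn : 0 ≤ n := norm_nonneg _
      have hms : n ^ (2:ℕ) ≤ RCLike.re ⟪a1 x, x⟫_ℂ * RCLike.re ⟪a2 x, x⟫_ℂ := by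
        rw [ha1, ha2]
        exact mixed_schwarz A x hx
      set u : ℝ := RCLike.re ⟪a1 x, x⟫_ℂ with hudef
      set v : ℝ := RCLike.re ⟪a2 x, x⟫_ℂ with hvdef
      have hu : 0 ≤ u := inner_re_nonneg' ha1nn x
      have hv : 0 ≤ v := inner_re_nonneg' ha2nn x
      set p : ℝ := u ^ (r/2) with hpdef
      set q : ℝ := v ^ (r/2) with hqdef
      have hp : 0 ≤ p := Real.rpow_nonneg hu _
      have hq : 0 ≤ q := Real.rpow_nonneg hv _
      have h1 : n ^ r ≤ p * q := by
        have e1 : n ^ r = (n^(2:ℕ)) ^ (r/2) := by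
          rw [← Real.rpow_natCast n 2, ← Real.rpow_mul hn]
          congr 1
          push_cast
          ring
        calc n ^ r = (n^(2:ℕ)) ^ (r/2) := e1
          _ ≤ (u*v) ^ (r/2) := Real.rpow_le_rpow (by positivity) hms hr20.le
          _ = p * q := Real.mul_rpow hu hv
      -- Hölder–McCarthy estimates
      have hHM1 : u ^ r ≤ RCLike.re ⟪T1 x, x⟫_ℂ := holder_mccarthy a1 ha1nn x hx r hr1
      have hHM2 : v ^ r ≤ RCLike.re ⟪T2 x, x⟫_ℂ := holder_mccarthy a2 ha2nn x hx r hr1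
      have hHM3 : p ≤ RCLike.re ⟪S1 x, x⟫_ℂ := holder_mccarthy a1 ha1nn x hx (r/2) hr2
      have hHM4 : q ≤ RCLike.re ⟪S2 x, x⟫_ℂ := holder_mccarthy a2 ha2nn x hx (r/2) hr2
      have hpsq : p ^ 2 = u ^ r := by
        rw [hpdef, ← Real.rpow_natCast (u ^ (r/2)) 2, ← Real.rpow_mul hu]
        congr 1
        push_cast
        ring
      have hqsq : q ^ 2 = v ^ r := by
        rw [hqdef, ← Real.rpow_natCast (v ^ (r/2)) 2, ← Real.rpow_mul hv]
        congr 1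
        push_cast
        ring
      set W : ℝ := RCLike.re ⟪X x, x⟫_ℂ with hWdef
      have hWsum : W = RCLike.re ⟪T1 x, x⟫_ℂ + RCLike.re ⟪T2 x, x⟫_ℂ
          + RCLike.re ⟪S1 x, x⟫_ℂ + RCLike.re ⟪S2 x, x⟫_ℂ := by
        rw [hWdef, hXdef]
        simp [ContinuousLinearMap.add_apply, inner_add_left]
      have hW : p^2 + q^2 + p + q ≤ W := by
        rw [hWsum, hpsq, hqsq]
        linarith
      have hWnn : 0 ≤ W := inner_re_nonneg' hXnn x
      have hWX : W ≤ ‖X‖ := inner_re_le_norm' X x hx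
      calc n ^ r ≤ p * q := h1
        _ ≤ (1/2) * gAux (p^2+q^2+p+q) := gAux_prod hp hq
        _ ≤ (1/2) * gAux W := by
            have := gAux_mono (by positivity) hW
            linarith
        _ ≤ (1/2) * gAux ‖X‖ := by
            have := gAux_mono hWnn hWX
            linarith
        _ ≤ c := by rw [hcdef]; linarith
    have hωle : numericalRadius A ≤ c ^ (1/r) := by
      rw [numericalRadius]
      refine Real.iSup_le (fun z => ?_) (Real.rpow_nonneg hc0 _)
      have h := key z
      have hn : (0:ℝ) ≤ ‖(⟪A z, (z : H)⟫_ℂ)‖ := norm_nonneg _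
      calc ‖(⟪A z, (z : H)⟫_ℂ)‖ = (‖(⟪A z, (z : H)⟫_ℂ)‖ ^ r) ^ (1/r) := by
            rw [← Real.rpow_mul hn, mul_one_div, div_self hr0.ne', Real.rpow_one]
        _ ≤ c ^ (1/r) := Real.rpow_le_rpow (Real.rpow_nonneg hn r) h (by positivity)
    have hω0 : 0 ≤ numericalRadius A := by
      rw [numericalRadius]
      exact Real.iSup_nonneg fun z => norm_nonneg _
    calc numericalRadius A ^ r ≤ (c ^ (1/r)) ^ r := Real.rpow_le_rpow hω0 hωle hr0.le
      _ = c := by rw [← Real.rpow_mul hc0, one_div, inv_mul_cancel₀ hr0.ne', Real.rpow_one]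
  · -- SECOND INEQUALITY
    have hS1T1 : S1 * S1 = T1 := by
      rw [hS1def, hT1def, ← cfc_mul _ _ a1 (contOn_rpow _ hr20 _) (contOn_rpow _ hr20 _)]
      refine cfc_congr fun t ht => ?_
      have ht0 := spectrum_nonneg_of_nonneg ha1nn ht
      rw [← Real.rpow_add' ht0 (by intro hcon; rw [show r/2 + r/2 = r by ring] at hcon; linarith)]
      rw [show r/2 + r/2 = r by ring]
    have hS2T2 : S2 * S2 = T2 := by
      rw [hS2def, hT2def, ← cfc_mul _ _ a2 (contOn_rpow _ hr20 _) (contOn_rpow _ hr20 _)]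
      refine cfc_congr fun t ht => ?_
      have ht0 := spectrum_nonneg_of_nonneg ha2nn ht
      rw [← Real.rpow_add' ht0 (by intro hcon; rw [show r/2 + r/2 = r by ring] at hcon; linarith)]
      rw [show r/2 + r/2 = r by ring]
    have hS1sa : IsSelfAdjoint S1 := cfc_predicate _ a1
    have hS2sa : IsSelfAdjoint S2 := cfc_predicate _ a2
    have hkey2 : (S1 + S2) * (S1 + S2) ≤ 2 • (T1 + T2) := by
      rw [← sub_nonneg]
      have hexp : 2 • (T1 + T2) - (S1 + S2) * (S1 + S2) = (S1 - S2) * (S1 - S2) := by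
        rw [← hS1T1, ← hS2T2, two_smul]
        noncomm_ring
      rw [hexp]
      have hsa : IsSelfAdjoint (S1 - S2) := hS1sa.sub hS2sa
      simpa [hsa.star_eq] using star_mul_self_nonneg (S1 - S2)
    have hSsq : ‖S1 + S2‖^2 ≤ 2 * ‖T1 + T2‖ := by
      have hsa : IsSelfAdjoint (S1 + S2) := hS1sa.add hS2sa
      have h1 : ‖S1+S2‖^2 = ‖(S1+S2)*(S1+S2)‖ := by
        rw [sq, ← CStarRing.norm_star_mul_self (x := S1+S2), hsa.star_eq]
      have hsqnn : (0:H →L[ℂ] H) ≤ (S1+S2)*(S1+S2) := by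
        simpa [hsa.star_eq] using star_mul_self_nonneg (S1 + S2)
      have h2 : ‖(S1+S2)*(S1+S2)‖ ≤ ‖2 • (T1+T2)‖ :=
        CStarAlgebra.norm_le_norm_of_nonneg_of_le hsqnn hkey2
      have h3 : ‖(2:ℕ) • (T1+T2)‖ ≤ 2 * ‖T1+T2‖ := by
        rw [two_smul]
        calc ‖(T1+T2) + (T1+T2)‖ ≤ ‖T1+T2‖ + ‖T1+T2‖ := norm_add_le _ _
          _ = 2 * ‖T1+T2‖ := by ring
      linarith
    have hXnorm : ‖X‖ ≤ ‖T1+T2‖ + ‖S1+S2‖ := by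
      have hXe : X = (T1+T2) + (S1+S2) := by rw [hXdef]; abel
      rw [hXe]
      exact norm_add_le _ _
    have hMnorm_le : ‖cfc gAux X‖ ≤ gAux ‖X‖ := by
      refine norm_cfc_le (gAux_nonneg (norm_nonneg X)) fun t ht => ?_
      have ht0 : 0 ≤ t := spectrum_nonneg_of_nonneg hXnn ht
      have htX : t ≤ ‖X‖ := le_trans (le_abs_self t)
        (by simpa using spectrum.norm_le_norm_of_mem ht)
      rw [Real.norm_eq_abs, abs_of_nonneg (gAux_nonneg ht0)]
      exact gAux_mono ht0 htX
    have hsecond : gAux ‖X‖ ≤ ‖T1 + T2‖ :=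
      gAux_le (norm_nonneg X) (norm_nonneg _) (norm_nonneg _) hXnorm hSsq
    linarith
end

section
/- Let H be a complex Hilbert space and A a bounded linear operator on H. Then ω(A) ≤ (1/2)·‖ |A| + |A*| ‖, where |A| = (A*A)^{1/2} and |A*| = (AA*)^{1/2}. -/
set_option maxHeartbeats 1600000
set_option linter.unusedSectionVars false
section Aux

variable {H : Type*} [NormedAddCommGroup H] [InnerProductSpace ℂ H] [CompleteSpace H]

open ContinuousLinearMap

private lemma aux_pow_intertwine (S T : H →L[ℂ] H) (n : ℕ) :
    (S * T) ^ n * S = S * (T * S) ^ n := by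
  induction n with
  | zero => simp
  | succ n ih =>
    calc (S * T) ^ (n + 1) * S = (S * T) ^ n * ((S * T) * S) := by rw [pow_succ, mul_assoc]
    _ = ((S * T) ^ n * S) * (T * S) := by rw [mul_assoc S T S, ← mul_assoc]
    _ = S * ((T * S) ^ n * (T * S)) := by rw [ih, mul_assoc]
    _ = S * (T * S) ^ (n + 1) := by rw [← pow_succ]

private lemma aux_aeval_intertwine (S T : H →L[ℂ] H) (p : Polynomial ℝ) :
    Polynomial.aeval (S * T) p * S = S * Polynomial.aeval (T * S) p := by
  induction p using Polynomial.induction_on' with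
  | add p q hp hq => rw [map_add, map_add, add_mul, mul_add, hp, hq]
  | monomial n c =>
    rw [Polynomial.aeval_monomial, Polynomial.aeval_monomial, mul_assoc,
      aux_pow_intertwine, ← mul_assoc, Algebra.commutes c S, mul_assoc]

private lemma aux_poly_approx (f : ℝ → ℝ) (hf : Continuous f) (M : ℝ) {δ : ℝ} (hδ : 0 < δ) :
    ∃ p : Polynomial ℝ, ∀ t ∈ Set.Icc (0 : ℝ) M, |f t - p.eval t| ≤ δ := by
  have h := polynomialFunctions_closure_eq_top 0 M
  set X : Set ℝ := Set.Icc (0 : ℝ) M with hX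
  let F : C(X, ℝ) := ⟨fun t => f t, hf.comp continuous_subtype_val⟩
  have hF : F ∈ closure ((polynomialFunctions X) : Set C(X, ℝ)) := by
    rw [← Subalgebra.topologicalClosure_coe, h]; trivial
  rw [Metric.mem_closure_iff] at hF
  obtain ⟨g, hg, hdist⟩ := hF δ hδ
  rw [polynomialFunctions_coe] at hg
  obtain ⟨p, rfl⟩ := hg
  refine ⟨p, fun t ht => ?_⟩
  have h1 : dist (F ⟨t, ht⟩) ((Polynomial.toContinuousMapOnAlgHom X p) ⟨t, ht⟩) ≤
      dist F (Polynomial.toContinuousMapOnAlgHom X p) := ContinuousMap.dist_apply_le_dist _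
  have h2 : dist (F ⟨t, ht⟩) ((Polynomial.toContinuousMapOnAlgHom X p) ⟨t, ht⟩)
      = |f t - p.eval t| := by
    simp [F, Real.dist_eq, Polynomial.toContinuousMapOnAlgHom,
      Polynomial.toContinuousMapOn, Polynomial.toContinuousMap]
  linarith [h2 ▸ h1, hdist.le]

private lemma aux_cfc_intertwine (A : H →L[ℂ] H) (f : ℝ → ℝ) (hf : Continuous f) :
    cfc f (A * adjoint A) * A = A * cfc f (adjoint A * A) := by
  rcases subsingleton_or_nontrivial H with hH | hH
  · apply Subsingleton.elim
  set b := adjoint A * A with hb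
  set a := A * adjoint A with ha
  have hb0 : (0 : H →L[ℂ] H) ≤ b := by rw [hb, ← star_eq_adjoint]; exact star_mul_self_nonneg A
  have ha0 : (0 : H →L[ℂ] H) ≤ a := by rw [ha, ← star_eq_adjoint]; exact mul_star_self_nonneg A
  have hbsa : IsSelfAdjoint b := .of_nonneg hb0
  have hasa : IsSelfAdjoint a := .of_nonneg ha0
  set M := max ‖a‖ ‖b‖ with hM
  have hspec_a : spectrum ℝ a ⊆ Set.Icc 0 M := fun t ht =>
    ⟨spectrum_nonneg_of_nonneg ha0 ht,
      le_trans (le_trans (le_abs_self t) (spectrum.norm_le_norm_of_mem ht)) (le_max_left _ _)⟩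
  have hspec_b : spectrum ℝ b ⊆ Set.Icc 0 M := fun t ht =>
    ⟨spectrum_nonneg_of_nonneg hb0 ht,
      le_trans (le_trans (le_abs_self t) (spectrum.norm_le_norm_of_mem ht)) (le_max_right _ _)⟩
  have key : ∀ δ : ℝ, 0 < δ → ‖cfc f a * A - A * cfc f b‖ ≤ 2 * ‖A‖ * δ := by
    intro δ hδ
    obtain ⟨p, hp⟩ := aux_poly_approx f hf M hδ
    have h1 : ‖cfc f a - cfc p.eval a‖ ≤ δ := by
      rw [← cfc_sub f p.eval a hf.continuousOn p.continuous.continuousOn]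
      exact norm_cfc_le hδ.le fun t ht => by
        simpa [Real.norm_eq_abs] using hp t (hspec_a ht)
    have h2 : ‖cfc p.eval b - cfc f b‖ ≤ δ := by
      rw [← cfc_sub p.eval f b p.continuous.continuousOn hf.continuousOn]
      exact norm_cfc_le hδ.le fun t ht => by
        simpa [Real.norm_eq_abs, abs_sub_comm] using hp t (hspec_b ht)
    have hmid : cfc p.eval a * A = A * cfc p.eval b := by
      rw [cfc_polynomial p a, cfc_polynomial p b, ha, hb, aux_aeval_intertwine]
    have hsplit : cfc f a * A - A * cfc f b
        = (cfc f a - cfc p.eval a) * A + A * (cfc p.eval b - cfc f b) := by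
      rw [sub_mul, mul_sub, hmid]; abel
    calc ‖cfc f a * A - A * cfc f b‖
        ≤ ‖(cfc f a - cfc p.eval a) * A‖ + ‖A * (cfc p.eval b - cfc f b)‖ := by
          rw [hsplit]; exact norm_add_le _ _
      _ ≤ ‖cfc f a - cfc p.eval a‖ * ‖A‖ + ‖A‖ * ‖cfc p.eval b - cfc f b‖ := by
          gcongr <;> exact norm_mul_le _ _
      _ ≤ δ * ‖A‖ + ‖A‖ * δ := by
          gcongr
      _ = 2 * ‖A‖ * δ := by ring
  have hz : ‖cfc f a * A - A * cfc f b‖ ≤ 0 := by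
    refine le_of_forall_pos_le_add fun ε hε => ?_
    have hδ : 0 < ε / (2 * ‖A‖ + 1) := by positivity
    have := key _ hδ
    have hA : (0:ℝ) ≤ ‖A‖ := norm_nonneg _
    rw [zero_add]
    calc ‖cfc f a * A - A * cfc f b‖ ≤ 2 * ‖A‖ * (ε / (2 * ‖A‖ + 1)) := this
      _ ≤ ε := by
          rw [div_eq_inv_mul, ← mul_assoc]
          have h1 : 2 * ‖A‖ * (2 * ‖A‖ + 1)⁻¹ ≤ 1 := by
            rw [mul_inv_le_iff₀ (by positivity), one_mul]; linarith
          nlinarith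
  have := le_antisymm hz (norm_nonneg _)
  rw [norm_eq_zero, sub_eq_zero] at this
  exact this

private lemma sa_inner_move {T : H →L[ℂ] H} (hT : IsSelfAdjoint T) (u v : H) :
    (inner ℂ (T u) v : ℂ) = inner ℂ u (T v) := by
  nth_rewrite 1 [← hT.adjoint_eq]
  exact adjoint_inner_left T v u

private lemma re_inner_symm (u v : H) :
    RCLike.re (inner ℂ u v : ℂ) = RCLike.re (inner ℂ v u : ℂ) :=
  inner_re_symm u v

private lemma aux_key (A : H →L[ℂ] H) (x : H) (hx : ‖x‖ = 1) {ε : ℝ} (hε : 0 < ε) :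
    ‖(inner ℂ (A x) x : ℂ)‖ ≤
      (1 / 2) * ‖cfc Real.sqrt (adjoint A * A) + cfc Real.sqrt (A * adjoint A)‖ + ε := by
  set a := adjoint A * A with ha
  set b := A * adjoint A with hb
  have ha0 : (0 : H →L[ℂ] H) ≤ a := by rw [ha, ← star_eq_adjoint]; exact star_mul_self_nonneg A
  have hb0 : (0 : H →L[ℂ] H) ≤ b := by rw [hb, ← star_eq_adjoint]; exact mul_star_self_nonneg A
  have hasa : IsSelfAdjoint a := .of_nonneg ha0
  have hbsa : IsSelfAdjoint b := .of_nonneg hb0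
  set s : ℝ → ℝ := fun t => Real.sqrt (Real.sqrt t + ε) with hs_def
  set r : ℝ → ℝ := fun t => (s t)⁻¹ with hr_def
  have hspos : ∀ t, 0 < s t := fun t =>
    Real.sqrt_pos.mpr (add_pos_of_nonneg_of_pos (Real.sqrt_nonneg t) hε)
  have hs : Continuous s := (Real.continuous_sqrt.add continuous_const).sqrt
  have hr : Continuous r := hs.inv₀ fun t => (hspos t).ne'
  set P := cfc s a with hP_def
  set Q := cfc r a with hQ_def
  set Q' := cfc r b with hQ'_def
  set e := cfc Real.sqrt a with he_def
  set e' := cfc Real.sqrt b with he'_def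
  have hP_sa : IsSelfAdjoint P := cfc_predicate s a
  have hQ'_sa : IsSelfAdjoint Q' := cfc_predicate r b
  have hPQ : P * Q = 1 := by
    rw [hP_def, hQ_def, ← cfc_mul s r a hs.continuousOn hr.continuousOn]
    calc cfc (fun t => s t * r t) a = cfc (fun _ : ℝ => (1 : ℝ)) a :=
          cfc_congr fun t _ => mul_inv_cancel₀ (hspos t).ne'
      _ = 1 := cfc_const_one ℝ a
  -- step 1 : ⟪Ax,x⟫ = ⟪P x, Q (A† x)⟫
  have key1 : (inner ℂ (A x) x : ℂ) = inner ℂ (P x) (Q (adjoint A x)) := by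
    have h15 : (inner ℂ (A x) x : ℂ) = inner ℂ x (adjoint A x) := by
      rw [← adjoint_inner_left]; simp
    have h16 : adjoint A x = P (Q (adjoint A x)) := by
      have := congrArg (fun T : H →L[ℂ] H => T (adjoint A x)) hPQ
      simpa [ContinuousLinearMap.mul_apply] using this.symm
    rw [h15]
    nth_rewrite 1 [h16]
    exact (sa_inner_move hP_sa x (Q (adjoint A x))).symm
  -- step 2 : ‖P x‖ ^ 2 = re ⟪e x, x⟫ + ε
  have hPP : P * P = e + ε • 1 := by
    have h1 : cfc (fun t => s t * s t) a = cfc (fun t => Real.sqrt t + ε) a :=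
      cfc_congr fun t _ => Real.mul_self_sqrt (add_nonneg (Real.sqrt_nonneg t) hε.le)
    have h2 : cfc (fun t => Real.sqrt t + ε) a = cfc Real.sqrt a + cfc (fun _ : ℝ => ε) a :=
      cfc_add (a := a) Real.sqrt (fun _ => ε) Real.continuous_sqrt.continuousOn
        continuousOn_const
    rw [hP_def, ← cfc_mul s s a hs.continuousOn hs.continuousOn, h1, h2, cfc_const ε a,
      Algebra.algebraMap_eq_smul_one, he_def]
  have hPx : ‖P x‖ ^ 2 = RCLike.re (inner ℂ (e x) x : ℂ) + ε := by
    have h1 : (inner ℂ (P x) (P x) : ℂ) = inner ℂ x ((P * P) x) := by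
      rw [ContinuousLinearMap.mul_apply]
      exact sa_inner_move hP_sa x (P x) |>.symm ▸ (sa_inner_move hP_sa x (P x)).symm.symm
    have h2 : ‖P x‖ ^ 2 = RCLike.re (inner ℂ (P x) (P x) : ℂ) :=
      (inner_self_eq_norm_sq (𝕜 := ℂ) _).symm
    have h1' : (inner ℂ (P x) (P x) : ℂ) = inner ℂ x ((P * P) x) := by
      rw [ContinuousLinearMap.mul_apply]; exact sa_inner_move hP_sa x (P x)
    rw [h2, h1', hPP]
    have h3 : ((e + ε • 1) x) = e x + ε • x := by simp
    rw [h3, inner_add_right, map_add]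
    have h5 : RCLike.re (inner ℂ x (ε • x) : ℂ) = ε := by
      rw [RCLike.real_smul_eq_coe_smul (K := ℂ), inner_smul_right,
        inner_self_eq_norm_sq_to_K (𝕜 := ℂ)]
      simp [hx]
    rw [h5, re_inner_symm x (e x)]
  -- step 3 : ‖Q (A† x)‖ ^ 2 ≤ re ⟪e' x, x⟫
  have hinter : Q * adjoint A = adjoint A * Q' := by
    have := aux_cfc_intertwine (adjoint A) r hr
    rwa [adjoint_adjoint, ← ha, ← hb, ← hQ_def, ← hQ'_def] at this
  have hQx : ‖Q (adjoint A x)‖ ^ 2 ≤ RCLike.re (inner ℂ (e' x) x : ℂ) := by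
    have h0 : Q (adjoint A x) = adjoint A (Q' x) := by
      have := congrArg (fun T : H →L[ℂ] H => T x) hinter
      simpa [ContinuousLinearMap.mul_apply] using this
    have h1 : ‖Q (adjoint A x)‖ ^ 2 = RCLike.re (inner ℂ x ((Q' * (b * Q')) x) : ℂ) := by
      rw [h0, ← inner_self_eq_norm_sq (𝕜 := ℂ)]
      rw [adjoint_inner_left A]
      have hb' : A (adjoint A (Q' x)) = b (Q' x) := by rw [hb]; simp [ContinuousLinearMap.mul_apply]
      rw [hb', sa_inner_move hQ'_sa x (b (Q' x))]
      simp [ContinuousLinearMap.mul_apply]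
    set h : ℝ → ℝ := fun t => r t * (t * r t) with hh_def
    have h2 : cfc h b = Q' * (b * Q') := by
      have hbQ : cfc (fun t : ℝ => t * r t) b = b * Q' := by
        rw [hQ'_def, cfc_mul (fun t : ℝ => t) r b continuousOn_id hr.continuousOn,
          cfc_id' ℝ b]
      rw [hQ'_def, ← hbQ, ← cfc_mul r (fun t => t * r t) b hr.continuousOn
        (continuous_id.mul hr).continuousOn]
    have h3 : cfc h b ≤ e' := by
      rw [he'_def]
      refine cfc_mono (fun t ht => ?_) ((hr.mul (continuous_id.mul hr)).continuousOn)
        Real.continuous_sqrt.continuousOn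
      have ht0 : 0 ≤ t := spectrum_nonneg_of_nonneg hb0 ht
      have hst : s t * s t = Real.sqrt t + ε :=
        Real.mul_self_sqrt (add_nonneg (Real.sqrt_nonneg t) hε.le)
      have hht : h t = t / (s t * s t) := by
        rw [hh_def, hr_def]
        field_simp
      rw [hht, hst, div_le_iff₀ (add_pos_of_nonneg_of_pos (Real.sqrt_nonneg t) hε)]
      nlinarith [Real.mul_self_sqrt ht0, Real.sqrt_nonneg t]
    have h4 : RCLike.re (inner ℂ x ((cfc h b) x) : ℂ) ≤ RCLike.re (inner ℂ x (e' x) : ℂ) := by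
      have hpos : (0 : H →L[ℂ] H) ≤ e' - cfc h b := sub_nonneg.mpr h3
      rw [nonneg_iff_isPositive] at hpos
      have h6 := hpos.re_inner_nonneg_left x
      have hre : RCLike.re (inner ℂ ((e' - cfc h b) x) x : ℂ) =
          RCLike.re (inner ℂ (e' x) x : ℂ) - RCLike.re (inner ℂ ((cfc h b) x) x : ℂ) := by
        simp [sub_apply, inner_sub_left]
      rw [hre] at h6
      rw [re_inner_symm x ((cfc h b) x), re_inner_symm x (e' x)]
      linarith
    calc ‖Q (adjoint A x)‖ ^ 2 = RCLike.re (inner ℂ x ((Q' * (b * Q')) x) : ℂ) := h1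
      _ = RCLike.re (inner ℂ x ((cfc h b) x) : ℂ) := by rw [h2]
      _ ≤ RCLike.re (inner ℂ x (e' x) : ℂ) := h4
      _ = RCLike.re (inner ℂ (e' x) x : ℂ) := re_inner_symm x (e' x)
  -- combine
  have hfinal : RCLike.re (inner ℂ ((e + e') x) x : ℂ) ≤ ‖e + e'‖ := by
    calc RCLike.re (inner ℂ ((e + e') x) x : ℂ) ≤ ‖(inner ℂ ((e + e') x) x : ℂ)‖ :=
          RCLike.re_le_norm _
      _ ≤ ‖(e + e') x‖ * ‖x‖ := norm_inner_le_norm _ _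
      _ ≤ ‖e + e'‖ * ‖x‖ * ‖x‖ := by gcongr; exact le_opNorm _ _
      _ = ‖e + e'‖ := by rw [hx]; ring
  have hadd : RCLike.re (inner ℂ ((e + e') x) x : ℂ)
      = RCLike.re (inner ℂ (e x) x : ℂ) + RCLike.re (inner ℂ (e' x) x : ℂ) := by
    simp [inner_add_left]
  calc ‖(inner ℂ (A x) x : ℂ)‖ ≤ ‖P x‖ * ‖Q (adjoint A x)‖ := by
        rw [key1]; exact norm_inner_le_norm _ _
    _ ≤ (‖P x‖ ^ 2 + ‖Q (adjoint A x)‖ ^ 2) / 2 := by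
        nlinarith [sq_nonneg (‖P x‖ - ‖Q (adjoint A x)‖)]
    _ ≤ (RCLike.re (inner ℂ (e x) x : ℂ) + ε + RCLike.re (inner ℂ (e' x) x : ℂ)) / 2 := by
        rw [hPx]; linarith
    _ = RCLike.re (inner ℂ ((e + e') x) x : ℂ) / 2 + ε / 2 := by rw [hadd]; ring
    _ ≤ (1 / 2) * ‖e + e'‖ + ε := by linarith [hfinal, hε.le]


end Aux

theorem numericalRadius_le_half_norm_abs_add_abs_adjoint
    {H : Type*} [NormedAddCommGroup H] [InnerProductSpace ℂ H] [CompleteSpace H]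
    (A : H →L[ℂ] H) :
    numericalRadius A ≤
      (1 / 2) * ‖opAbs A + opAbs (ContinuousLinearMap.adjoint A)‖ := by
  have ha0 : (0 : H →L[ℂ] H) ≤ ContinuousLinearMap.adjoint A * A := by
    rw [← ContinuousLinearMap.star_eq_adjoint]; exact star_mul_self_nonneg A
  have hb0 : (0 : H →L[ℂ] H) ≤ A * ContinuousLinearMap.adjoint A := by
    rw [← ContinuousLinearMap.star_eq_adjoint]; exact mul_star_self_nonneg A
  have hre : opAbs A = cfc Real.sqrt (ContinuousLinearMap.adjoint A * A) := by
    rw [opAbs, CFC.sqrt_eq_cfc, cfc_nnreal_eq_real NNReal.sqrt _ ha0]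
    exact cfc_congr fun t _ => by rw [Real.sqrt]
  have hre' : opAbs (ContinuousLinearMap.adjoint A)
      = cfc Real.sqrt (A * ContinuousLinearMap.adjoint A) := by
    rw [opAbs, ContinuousLinearMap.adjoint_adjoint, CFC.sqrt_eq_cfc,
      cfc_nnreal_eq_real NNReal.sqrt _ hb0]
    exact cfc_congr fun t _ => by rw [Real.sqrt]
  rw [numericalRadius, hre, hre']
  refine Real.iSup_le (fun x => ?_) (by positivity)
  refine le_of_forall_pos_le_add fun ε hε => ?_
  exact aux_key A x x.2 hε
end
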